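/- arXiv:2401.08929 — 7 statements merged into one kernel-verified Lean document; each statement's English description precedes it below -/
import Mathlib

section
/- Let Ã be the (m+1)×(m+1) matrix indexed by {0}∪M defined in the context. Then there exists a vector v ∈ ℝ^{m+1} with v_0 = 1, v_i > 0 for every i ∈ M, and Ã v = v; moreover, every nonzero vector w ∈ ℝ^{m+1} with nonnegative entries satisfying Ã w = w is a positive scalar multiple of v (uniqueness up to normalization). -/
/-!
Context: m ≥ 1 firms M = {1,…,m} (`Fin m`) and household 0 (`none` in
`Option (Fin m)`); `a0 i` = a_{0,i}, `aL i` = a_{i,0}, `A i j` = a_{i,j},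
`eps` = ε, and `tildeA` = Ã as in the paper.

STATEMENT 1: there exists v ∈ ℝ^{m+1} with v_0 = 1, v_i > 0 for i ∈ M, and
Ã v = v; moreover every nonzero nonnegative w with Ã w = w is a positive
scalar multiple of v.
-/

noncomputable section

open Matrix

/-- ε_i := 1 − Σ_{j∈M∪{0}} a_{i,j}. -/
def eps (m : ℕ) (aL : Fin m → ℝ) (A : Fin m → Fin m → ℝ) (i : Fin m) : ℝ :=
  1 - (aL i + ∑ j, A i j)

/-- The matrix Ã, indexed by {0}∪M (household `none`, firms `some i`):
Ã_{0,0} = 0, Ã_{0,j} = a_{j,0}, Ã_{i,0} = a_{0,i}, Ã_{i,j} = a_{j,i} + ε_j a_{0,i}. -/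
def tildeA (m : ℕ) (a0 : Fin m → ℝ) (aL : Fin m → ℝ) (A : Fin m → Fin m → ℝ) :
    Matrix (Option (Fin m)) (Option (Fin m)) ℝ :=
  Matrix.of fun i j =>
    match i, j with
    | none, none => 0
    | none, some jj => aL jj
    | some ii, none => a0 ii
    | some ii, some jj => A jj ii + eps m aL A jj * a0 ii

theorem tildeA_perron_eigenvector
    (m : ℕ) (hm : 1 ≤ m)
    (a0 : Fin m → ℝ) (aL : Fin m → ℝ) (A : Fin m → Fin m → ℝ)
    (ha0 : ∀ i, 0 < a0 i) (ha0sum : ∑ i, a0 i = 1)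
    (haL : ∀ i, 0 < aL i) (hA : ∀ i j, 0 ≤ A i j)
    (hrow : ∀ i, aL i + ∑ j, A i j ≤ 1)
    (hex : ∃ i j, 0 < A i j) :
    ∃ v : Option (Fin m) → ℝ,
      v none = 1 ∧ (∀ i : Fin m, 0 < v (some i)) ∧
      (tildeA m a0 aL A).mulVec v = v ∧
      ∀ w : Option (Fin m) → ℝ, w ≠ 0 → (∀ i, 0 ≤ w i) →
        (tildeA m a0 aL A).mulVec w = w → ∃ c : ℝ, 0 < c ∧ w = c • v := by
  classical
  set T := tildeA m a0 aL A with hT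
  -- entries of T are nonnegative
  have heps : ∀ j, 0 ≤ eps m aL A j := fun j => by
    have := hrow j; simp [eps]; linarith
  have hnn : ∀ i j, 0 ≤ T i j := by
    rintro (_|i) (_|j) <;> simp [hT, tildeA]
    · exact (haL j).le
    · exact (ha0 i).le
    · exact add_nonneg (hA j i) (mul_nonneg (heps j) (ha0 i).le)
  -- column sums are 1
  have hcol : ∀ j, ∑ i, T i j = 1 := by
    rintro (_|j)
    · simp [hT, tildeA, Fintype.sum_option, ha0sum]
    · have h1 : ∑ i, T i (some j)
          = aL j + ∑ i : Fin m, (A j i + eps m aL A j * a0 i) := by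
        rw [Fintype.sum_option]; rfl
      rw [h1, Finset.sum_add_distrib, ← Finset.mul_sum, ha0sum, mul_one, eps]
      ring
  -- abs of a fixed vector is fixed
  have habs : ∀ x : Option (Fin m) → ℝ, T.mulVec x = x →
      T.mulVec (fun i => |x i|) = (fun i => |x i|) := by
    intro x hx
    have hle : ∀ i, |x i| ≤ T.mulVec (fun i => |x i|) i := by
      intro i
      have : x i = ∑ j, T i j * x j := by
        rw [← congrFun hx i]; simp [Matrix.mulVec, dotProduct]
      calc |x i| = |∑ j, T i j * x j| := by rw [this]
        _ ≤ ∑ j, |T i j * x j| := Finset.abs_sum_le_sum_abs _ _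
        _ = ∑ j, T i j * |x j| := by
            refine Finset.sum_congr rfl fun j _ => ?_
            rw [abs_mul, abs_of_nonneg (hnn i j)]
        _ = T.mulVec (fun i => |x i|) i := by simp [Matrix.mulVec, dotProduct]
    have hsum : ∑ i, T.mulVec (fun i => |x i|) i = ∑ i, |x i| := by
      simp only [Matrix.mulVec, dotProduct]
      rw [Finset.sum_comm]
      refine Finset.sum_congr rfl fun j _ => ?_
      rw [← Finset.sum_mul, hcol j, one_mul]
    funext i
    have := (Finset.sum_eq_sum_iff_of_le (fun i _ => hle i)).mp hsum.symm i
      (Finset.mem_univ i)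
    exact this.symm
  -- zero propagation from some i to none
  have hprop1 : ∀ u : Option (Fin m) → ℝ, (∀ i, 0 ≤ u i) → T.mulVec u = u →
      ∀ i : Fin m, u (some i) = 0 → u none = 0 := by
    intro u hu hfix i hi
    have heq : ∑ j, T (some i) j * u j = 0 := by
      have := congrFun hfix (some i)
      simpa [Matrix.mulVec, dotProduct, hi] using this
    have hterm : ∀ j, 0 ≤ T (some i) j * u j := fun j =>
      mul_nonneg (hnn _ j) (hu j)
    have := (Finset.sum_eq_zero_iff_of_nonneg (fun j _ => hterm j)).mp heq none
      (Finset.mem_univ none)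
    have hpos : T (some i) none = a0 i := by simp [hT, tildeA]
    rw [hpos] at this
    exact by
      rcases mul_eq_zero.mp this with h | h
      · exact absurd h (ha0 i).ne'
      · exact h
  -- zero propagation: if u none = 0 then u = 0
  have hprop0 : ∀ u : Option (Fin m) → ℝ, (∀ i, 0 ≤ u i) → T.mulVec u = u →
      u none = 0 → u = 0 := by
    intro u hu hfix h0
    have heq : ∑ j, T none j * u j = 0 := by
      have := congrFun hfix none
      simpa [Matrix.mulVec, dotProduct, h0] using this
    have hterm : ∀ j, 0 ≤ T none j * u j := fun j =>
      mul_nonneg (hnn _ j) (hu j)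
    have hall := (Finset.sum_eq_zero_iff_of_nonneg (fun j _ => hterm j)).mp heq
    funext j
    match j with
    | none => exact h0
    | some jj =>
      have := hall (some jj) (Finset.mem_univ _)
      have hpos : T none (some jj) = aL jj := by simp [hT, tildeA]
      rw [hpos] at this
      rcases mul_eq_zero.mp this with h | h
      · exact absurd h (haL jj).ne'
      · exact h
  -- positivity of nonzero nonneg fixed vectors
  have hposall : ∀ u : Option (Fin m) → ℝ, (∀ i, 0 ≤ u i) → T.mulVec u = u →
      u ≠ 0 → ∀ i, 0 < u i := by
    intro u hu hfix hne i
    rcases lt_or_eq_of_le (hu i) with h | h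
    · exact h
    · exfalso
      apply hne
      match i with
      | none => exact hprop0 u hu hfix h.symm
      | some ii => exact hprop0 u hu hfix (hprop1 u hu hfix ii h.symm)
  -- existence of a nonzero fixed vector
  have hdet : (T - 1).det = 0 := by
    rw [← Matrix.exists_vecMul_eq_zero_iff]
    refine ⟨fun _ => 1, ?_, ?_⟩
    · intro h
      have := congrFun h none
      simp at this
    · funext j
      simp only [Matrix.vecMul, dotProduct, Matrix.sub_apply, Matrix.one_apply,
        one_mul, Pi.zero_apply]
      rw [Finset.sum_sub_distrib, hcol j]
      simp
  obtain ⟨x, hx0, hxfix⟩ := Matrix.exists_mulVec_eq_zero_iff.mpr hdet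
  have hxfix' : T.mulVec x = x := by
    have := hxfix
    rw [Matrix.sub_mulVec, Matrix.one_mulVec, sub_eq_zero] at this
    exact this
  -- u := |x| is nonneg nonzero fixed
  set u : Option (Fin m) → ℝ := fun i => |x i| with hu_def
  have hufix : T.mulVec u = u := habs x hxfix'
  have hunn : ∀ i, 0 ≤ u i := fun i => abs_nonneg _
  have hune : u ≠ 0 := by
    intro h
    apply hx0
    funext i
    have := congrFun h i
    simpa [hu_def, abs_eq_zero] using this
  have hupos := hposall u hunn hufix hune
  -- normalize
  refine ⟨(u none)⁻¹ • u, ?_, ?_, ?_, ?_⟩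
  · simp [inv_mul_cancel₀ (hupos none).ne']
  · intro i
    exact mul_pos (inv_pos.mpr (hupos none)) (hupos (some i))
  · rw [Matrix.mulVec_smul, hufix]
  · intro w hw0 hwnn hwfix
    have hwpos := hposall w hwnn hwfix hw0
    refine ⟨w none, hwpos none, ?_⟩
    -- consider z := w - (w none) • ((u none)⁻¹ • u)
    set v : Option (Fin m) → ℝ := (u none)⁻¹ • u with hv_def
    have hvfix : T.mulVec v = v := by rw [hv_def, Matrix.mulVec_smul, hufix]
    have hvnone : v none = 1 := by simp [hv_def, inv_mul_cancel₀ (hupos none).ne']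
    set z : Option (Fin m) → ℝ := w - (w none) • v with hz_def
    have hzfix : T.mulVec z = z := by
      rw [hz_def, Matrix.mulVec_sub, Matrix.mulVec_smul, hwfix, hvfix]
    have hzabs := habs z hzfix
    have hznone : |z none| = 0 := by
      simp [hz_def, hvnone]
    have hz0 : (fun i => |z i|) = 0 :=
      hprop0 _ (fun i => abs_nonneg _) hzabs hznone
    have : z = 0 := by
      funext i
      have := congrFun hz0 i
      simpa [abs_eq_zero] using this
    have := sub_eq_zero.mp (by rw [← hz_def]; exact this)
    exact this

end
end

section
/- Fix indices i,j ∈ M with A_{i,j} > 0 and let E_{ij} denote the matrix unit with 1 in position (i,j) and 0 elsewhere. Then the function t ↦ W(A + t E_{ij}) is differentiable at t = 0, with derivative equal to ((I − A)^{-T} a_0)_i · ( ((I − A)^{-1} u(A))_j + log A_{i,j} + 1 ), where (I − A)^{-T} denotes the transpose of (I − A)^{-1}. -/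
/-!
Context: M = Fin m, a_0, λ > 0, c ∈ ℝ^M. For a nonnegative matrix A' with
row sums < 1 define u(A')_i = log λ_i + c_i + Σ_j A'_{i,j} log A'_{i,j}
(0·log 0 = 0, automatic since `Real.log 0 = 0`) and
W(A') = a_0 ⋅ ((I − A')⁻¹ u(A')).

STATEMENT 7: for fixed i,j with A_{i,j} > 0, the map t ↦ W(A + t E_{ij})
is differentiable at 0 with derivative
((I − A)^{-T} a_0)_i ( ((I − A)⁻¹ u(A))_j + log A_{i,j} + 1 ).
-/

noncomputable section

open Matrix

/-- Entropy-corrected productivity vector u(A'). -/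
def uvec (m : ℕ) (lam c : Fin m → ℝ) (A : Matrix (Fin m) (Fin m) ℝ) :
    Fin m → ℝ :=
  fun i => Real.log (lam i) + c i + ∑ j, A i j * Real.log (A i j)

/-- Welfare W(A') = a_0 ⋅ ((I − A')⁻¹ u(A')). -/
def W (m : ℕ) (a0 lam c : Fin m → ℝ) (A : Matrix (Fin m) (Fin m) ℝ) : ℝ :=
  a0 ⬝ᵥ ((1 - A)⁻¹.mulVec (uvec m lam c A))

attribute [local instance] Matrix.linftyOpNormedRing Matrix.linftyOpNormedAlgebra

/-- Strict diagonal dominance: `1 - A` is invertible. -/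
lemma aux_isUnit_one_sub (m : ℕ) (A : Matrix (Fin m) (Fin m) ℝ)
    (hA : ∀ i j, 0 ≤ A i j) (hrow : ∀ i, ∑ j, A i j < 1) :
    IsUnit (1 - A) := by
  rw [Matrix.isUnit_iff_isUnit_det, isUnit_iff_ne_zero]
  apply det_ne_zero_of_sum_row_lt_diag
  intro k
  have hkk : A k k ≤ ∑ j, A k j := Finset.single_le_sum (fun j _ => hA k j) (Finset.mem_univ k)
  have h1 : ∀ l, l ≠ k → (1 - A) k l = -A k l := by
    intro l hl; simp [Matrix.sub_apply, Matrix.one_apply, Ne.symm hl]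
  have h2 : (1 - A) k k = 1 - A k k := by simp [Matrix.sub_apply, Matrix.one_apply]
  calc ∑ l ∈ Finset.univ.erase k, ‖(1 - A) k l‖
      = ∑ l ∈ Finset.univ.erase k, A k l := by
        apply Finset.sum_congr rfl
        intro l hl
        rw [h1 l (Finset.mem_erase.mp hl).1, norm_neg, Real.norm_of_nonneg (hA k l)]
    _ < 1 - A k k := by
        have := hrow k
        rw [← Finset.sum_erase_add _ _ (Finset.mem_univ k)] at this
        linarith
    _ = ‖(1 - A) k k‖ := by
        rw [h2, Real.norm_of_nonneg]; linarith [hkk.trans_lt (hrow k)]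

/-- Derivative of the resolvent `t ↦ (1 - (A + tE))⁻¹` (as `Ring.inverse`). -/
lemma aux_hasDerivAt_inverse (m : ℕ) (A E : Matrix (Fin m) (Fin m) ℝ)
    (hB : IsUnit (1 - A)) :
    HasDerivAt (fun t : ℝ => Ring.inverse ((1 : Matrix (Fin m) (Fin m) ℝ) - (A + t • E)))
      ((1 - A)⁻¹ * E * (1 - A)⁻¹) 0 := by
  haveI : CompleteSpace (Matrix (Fin m) (Fin m) ℝ) := FiniteDimensional.complete ℝ _
  have hcoe : (↑hB.unit : Matrix (Fin m) (Fin m) ℝ) = 1 - A := hB.unit_spec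
  have hM : HasDerivAt (fun t : ℝ => (1 : Matrix (Fin m) (Fin m) ℝ) - (A + t • E)) (-E) 0 := by
    have h1 : HasDerivAt (fun t : ℝ => A + t • E) E 0 := by
      have h0 := ((hasDerivAt_id (0:ℝ)).smul_const E).const_add A
      simp only [id, one_smul] at h0
      exact h0
    have h1' := h1.const_sub 1
    exact h1'
  have hpt : (1:Matrix (Fin m) (Fin m) ℝ) - (A + (0:ℝ) • E) = ↑hB.unit := by rw [hcoe]; simp
  have hinv' : HasFDerivAt (Ring.inverse : Matrix (Fin m) (Fin m) ℝ → Matrix (Fin m) (Fin m) ℝ)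
      (-(ContinuousLinearMap.mulLeftRight ℝ (Matrix (Fin m) (Fin m) ℝ)
        ((↑hB.unit⁻¹ : Matrix (Fin m) (Fin m) ℝ)) ((↑hB.unit⁻¹ : Matrix (Fin m) (Fin m) ℝ))))
      ((fun t : ℝ => (1:Matrix (Fin m) (Fin m) ℝ) - (A + t • E)) 0) := by
    simp only [hpt, zero_smul, add_zero]
    exact hasFDerivAt_ringInverse hB.unit
  have h2 := hinv'.comp_hasDerivAt 0 hM
  refine h2.congr_deriv ?_
  simp [Matrix.coe_units_inv, hcoe]

/-- Derivative of the entropy term in each coordinate. -/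
lemma aux_hasDerivAt_uvec (m : ℕ) (lam c : Fin m → ℝ) (A : Matrix (Fin m) (Fin m) ℝ)
    (i j : Fin m) (hij : 0 < A i j) (k : Fin m) :
    HasDerivAt (fun t : ℝ => uvec m lam c (A + t • Matrix.single i j (1:ℝ)) k)
      (if k = i then Real.log (A i j) + 1 else 0) 0 := by
  set E := Matrix.single i j (1:ℝ) with hE
  have hterm : ∀ l : Fin m, HasDerivAt
      (fun t : ℝ => (A + t • E) k l * Real.log ((A + t • E) k l))
      (if i = k ∧ j = l then Real.log (A i j) + 1 else 0) 0 := by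
    intro l
    by_cases h : i = k ∧ j = l
    · obtain ⟨rfl, rfl⟩ := h
      have hfun : (fun t : ℝ => (A + t • E) i j * Real.log ((A + t • E) i j))
          = fun t : ℝ => (A i j + t) * Real.log (A i j + t) := by
        funext t; simp [hE, Matrix.single, Matrix.add_apply]
      rw [hfun]
      have h1 : HasDerivAt (fun t : ℝ => A i j + t) 1 0 := by
        simpa using (hasDerivAt_id (0:ℝ)).const_add (A i j)
      have h2 := (Real.hasDerivAt_mul_log (x := A i j + 0) (by simpa using hij.ne')).comp (0:ℝ) h1
      simp only [add_zero, mul_one] at h2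
      simp only [and_self, if_true]
      exact h2
    · have hEkl : E k l = 0 := by
        simp only [hE, Matrix.single, Matrix.of_apply, ite_eq_right_iff]
        exact fun hc => absurd hc h
      have hfun : (fun t : ℝ => (A + t • E) k l * Real.log ((A + t • E) k l))
          = fun _ : ℝ => A k l * Real.log (A k l) := by
        funext t; simp [Matrix.add_apply, hEkl]
      rw [hfun]
      simpa [h] using hasDerivAt_const (0:ℝ) (A k l * Real.log (A k l))
  have hsum := (HasDerivAt.fun_sum (fun l (_ : l ∈ Finset.univ) => hterm l)).const_add
      (Real.log (lam k) + c k)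
  have hval : (∑ l, if i = k ∧ j = l then Real.log (A i j) + 1 else 0)
      = if k = i then Real.log (A i j) + 1 else 0 := by
    by_cases hk : k = i
    · subst hk; simp
    · have : ∀ l, ¬(i = k ∧ j = l) := fun l hc => hk hc.1.symm
      simp [this, hk]
  rw [hval] at hsum
  exact hsum

/-- The final algebraic identity for the derivative value. -/
lemma aux_deriv_value (m : ℕ) (a0 u : Fin m → ℝ) (B : Matrix (Fin m) (Fin m) ℝ)
    (i j : Fin m) (L : ℝ) :
    ∑ k, a0 k * ∑ l, ((B * Matrix.single i j (1:ℝ) * B) k l * u l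
        + B k l * (if l = i then L + 1 else 0))
      = (Bᵀ.mulVec a0 i) * ((B.mulVec u) j + L + 1) := by
  have hBEB : ∀ k l, (B * Matrix.single i j (1:ℝ) * B) k l = B k i * B j l := by
    intro k l
    simp [Matrix.mul_apply, Matrix.single, ite_and, mul_ite, ite_mul,
      Finset.sum_ite_eq, Finset.sum_ite_eq', Finset.mul_sum]
  simp only [hBEB, Matrix.mulVec, dotProduct, Matrix.transpose_apply,
    Finset.sum_add_distrib, mul_ite, mul_zero, Finset.sum_ite_eq', Finset.mem_univ, if_true]
  rw [Finset.sum_mul]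
  congr 1 with k
  have : ∑ x : Fin m, B k i * B j x * u x = B k i * ∑ x : Fin m, B j x * u x := by
    rw [Finset.mul_sum]; congr 1 with x; ring
  rw [this]; ring

theorem welfare_hasDerivAt
    (m : ℕ) (a0 lam c : Fin m → ℝ) (hlam : ∀ i, 0 < lam i)
    (A : Matrix (Fin m) (Fin m) ℝ)
    (hA : ∀ i j, 0 ≤ A i j) (hrow : ∀ i, ∑ j, A i j < 1)
    (i j : Fin m) (hij : 0 < A i j) :
    HasDerivAt (fun t : ℝ => W m a0 lam c (A + t • Matrix.single i j (1 : ℝ)))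
      ((((1 - A)⁻¹)ᵀ.mulVec a0 i)
        * (((1 - A)⁻¹.mulVec (uvec m lam c A)) j + Real.log (A i j) + 1))
      0 := by
  set E := Matrix.single i j (1:ℝ) with hE
  have hB : IsUnit ((1 : Matrix (Fin m) (Fin m) ℝ) - A) := aux_isUnit_one_sub m A hA hrow
  -- derivative of the matrix inverse
  have h3 : HasDerivAt (fun t : ℝ => Ring.inverse ((1 : Matrix (Fin m) (Fin m) ℝ) - (A + t • E)))
      ((1 - A)⁻¹ * E * (1 - A)⁻¹) 0 := aux_hasDerivAt_inverse m A E hB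
  -- entrywise derivative of the inverse
  have hf : ∀ k l : Fin m,
      HasDerivAt (fun t : ℝ => Ring.inverse ((1 : Matrix (Fin m) (Fin m) ℝ) - (A + t • E)) k l)
        (((1 - A)⁻¹ * E * (1 - A)⁻¹) k l) 0 := by
    intro k l
    let φ : Matrix (Fin m) (Fin m) ℝ →ₗ[ℝ] ℝ :=
      { toFun := fun M => M k l, map_add' := fun _ _ => rfl, map_smul' := fun _ _ => rfl }
    exact (LinearMap.toContinuousLinearMap φ).hasFDerivAt.comp_hasDerivAt 0 h3
  -- derivative of uvec components
  have hg : ∀ l : Fin m,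
      HasDerivAt (fun t : ℝ => uvec m lam c (A + t • E) l)
        (if l = i then Real.log (A i j) + 1 else 0) 0 :=
    fun l => aux_hasDerivAt_uvec m lam c A i j hij l
  -- rewrite W as an explicit double sum
  have hw : (fun t : ℝ => W m a0 lam c (A + t • E))
      = fun t : ℝ => ∑ k, a0 k * ∑ l,
          Ring.inverse ((1 : Matrix (Fin m) (Fin m) ℝ) - (A + t • E)) k l
            * uvec m lam c (A + t • E) l := by
    funext t
    simp [W, dotProduct, Matrix.mulVec, Matrix.nonsing_inv_eq_ringInverse]
  rw [hw]
  have hmain : HasDerivAt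
      (fun t : ℝ => ∑ k, a0 k * ∑ l,
          Ring.inverse ((1 : Matrix (Fin m) (Fin m) ℝ) - (A + t • E)) k l
            * uvec m lam c (A + t • E) l)
      (∑ k, a0 k * ∑ l,
          (((1 - A)⁻¹ * E * (1 - A)⁻¹) k l * uvec m lam c (A + (0:ℝ) • E) l
            + Ring.inverse ((1 : Matrix (Fin m) (Fin m) ℝ) - (A + (0:ℝ) • E)) k l
                * (if l = i then Real.log (A i j) + 1 else 0))) 0 :=
    HasDerivAt.fun_sum fun k _ =>
      ((HasDerivAt.fun_sum fun l _ => (hf k l).mul (hg l)).const_mul (a0 k))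
  convert hmain using 1
  have h0 : A + (0:ℝ) • E = A := by simp
  rw [show (∑ k, a0 k * ∑ l,
          (((1 - A)⁻¹ * E * (1 - A)⁻¹) k l * uvec m lam c (A + (0:ℝ) • E) l
            + Ring.inverse ((1 : Matrix (Fin m) (Fin m) ℝ) - (A + (0:ℝ) • E)) k l
                * (if l = i then Real.log (A i j) + 1 else 0)))
      = ∑ k, a0 k * ∑ l,
          (((1 - A)⁻¹ * E * (1 - A)⁻¹) k l * uvec m lam c A l
            + (1 - A)⁻¹ k l * (if l = i then Real.log (A i j) + 1 else 0)) from by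
    simp [h0, Matrix.nonsing_inv_eq_ringInverse]]
  exact (aux_deriv_value m a0 (uvec m lam c A) ((1 - A)⁻¹) i j (Real.log (A i j))).symm

end
end

section
/- Suppose a_{0,i} > 0 for every i ∈ M and suppose A ∈ F maximizes W over the feasible set F. Then for every firm i, every category ℓ, and every pair j,k ∈ M_ℓ with A_{i,j} > 0 and A_{i,k} > 0, the marginal contributions coincide: ((I − A)^{-1} u(A))_j + log A_{i,j} = ((I − A)^{-1} u(A))_k + log A_{i,k}. -/
/-!
Context: M = Fin m partitioned into nonempty categories (surjective `cat`),
a_0 > 0, λ > 0, c ∈ ℝ^M; requirements b_{i,0} > 0, b_{i,ℓ} ≥ 0 with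
b_{i,0} + Σ_ℓ b_{i,ℓ} = 1. Feasible set F: nonnegative matrices whose
within-category row sums equal b_{i,ℓ}. u(A)_i = log λ_i + c_i +
Σ_j A_{i,j} log A_{i,j} (0·log 0 = 0 automatic) and
W(A) = a_0 ⋅ ((I − A)⁻¹ u(A)).

STATEMENT 8: if A maximizes W over F, then for every firm i, category ℓ and
j,k ∈ M_ℓ with A_{i,j}, A_{i,k} > 0,
((I−A)⁻¹u(A))_j + log A_{i,j} = ((I−A)⁻¹u(A))_k + log A_{i,k}.
-/

noncomputable section

open Matrix Finset

/-- Feasible set F. -/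
def Feasible (m l : ℕ) (cat : Fin m → Fin l) (b : Fin m → Fin l → ℝ) :
    Set (Matrix (Fin m) (Fin m) ℝ) :=
  { A | (∀ i j, 0 ≤ A i j) ∧
        ∀ (i : Fin m) (ℓ : Fin l),
          ∑ j ∈ univ.filter (fun j => cat j = ℓ), A i j = b i ℓ }

lemma aux_det_ne (m : ℕ) (A : Matrix (Fin m) (Fin m) ℝ) (b0 : Fin m → ℝ)
    (hApos : ∀ p q, 0 ≤ A p q) (hb0 : ∀ p, 0 < b0 p)
    (hrow : ∀ p, ∑ q, A p q = 1 - b0 p) : (1 - A).det ≠ 0 := by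
  apply det_ne_zero_of_sum_row_lt_diag
  intro p
  have hAle : A p p ≤ 1 - b0 p := by
    rw [← hrow p]
    exact Finset.single_le_sum (fun r _ => hApos p r) (mem_univ p)
  have h1 : ∑ q ∈ univ.erase p, ‖(1 - A) p q‖ = (1 - b0 p) - A p p := by
    have h2 : ∀ q ∈ univ.erase p, ‖(1 - A) p q‖ = A p q := by
      intro q hq
      have hqp : q ≠ p := (Finset.mem_erase.mp hq).1
      have : (1 - A) p q = -A p q := by
        simp [Matrix.sub_apply, Matrix.one_apply, (Ne.symm hqp)]
      rw [this, norm_neg, Real.norm_eq_abs, abs_of_nonneg (hApos p q)]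
    rw [Finset.sum_congr rfl h2]
    have := Finset.add_sum_erase univ (fun q => A p q) (mem_univ p)
    rw [hrow p] at this
    linarith
  have h3 : ‖(1 - A) p p‖ = 1 - A p p := by
    have : (1 - A) p p = 1 - A p p := by simp [Matrix.sub_apply, Matrix.one_apply]
    rw [this, Real.norm_eq_abs, abs_of_nonneg (by linarith [hb0 p])]
  rw [h1, h3]
  linarith [hb0 p]

lemma aux_inv_entry (m : ℕ) (A : Matrix (Fin m) (Fin m) ℝ) (b0 : Fin m → ℝ)
    (hApos : ∀ p q, 0 ≤ A p q) (hb0 : ∀ p, 0 < b0 p)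
    (hrow : ∀ p, ∑ q, A p q = 1 - b0 p) :
    ∀ p q, (1 - A)⁻¹ p q = (if p = q then (1:ℝ) else 0) + ∑ r, A p r * (1 - A)⁻¹ r q := by
  have hunit : IsUnit (1 - A).det := isUnit_iff_ne_zero.mpr (aux_det_ne m A b0 hApos hb0 hrow)
  have hCid : (1 - A)⁻¹ * (1 - A) = 1 := Matrix.nonsing_inv_mul _ hunit
  have hCid' : (1 - A) * (1 - A)⁻¹ = 1 := Matrix.mul_nonsing_inv _ hunit
  have hCexp : (1 - A)⁻¹ = 1 + A * (1 - A)⁻¹ := by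
    have h : (1 - A)⁻¹ - A * (1 - A)⁻¹ = 1 := by
      calc (1 - A)⁻¹ - A * (1 - A)⁻¹ = (1 - A) * (1 - A)⁻¹ := by
            rw [Matrix.sub_mul, Matrix.one_mul]
      _ = 1 := hCid'
    have := sub_eq_iff_eq_add.mp h
    linear_combination (norm := abel) this
  intro p q
  conv_lhs => rw [hCexp]
  simp [Matrix.add_apply, Matrix.mul_apply, Matrix.one_apply]

lemma aux_inv_nonneg (m : ℕ) (A : Matrix (Fin m) (Fin m) ℝ) (b0 : Fin m → ℝ)
    (hApos : ∀ p q, 0 ≤ A p q) (hb0 : ∀ p, 0 < b0 p)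
    (hrow : ∀ p, ∑ q, A p q = 1 - b0 p) (hm : 0 < m) :
    ∀ p q, 0 ≤ (1 - A)⁻¹ p q := by
  have hCentry := aux_inv_entry m A b0 hApos hb0 hrow
  intro p q
  have hne : (univ : Finset (Fin m)).Nonempty := by
    exact univ_nonempty_iff.mpr (Fin.pos_iff_nonempty.mp hm)
  obtain ⟨p', _, hmin⟩ := Finset.exists_min_image univ (fun r => (1 - A)⁻¹ r q) hne
  have key : (1 - b0 p') * (1 - A)⁻¹ p' q ≤ (1 - A)⁻¹ p' q := by
    calc (1 - b0 p') * (1 - A)⁻¹ p' q = ∑ r, A p' r * (1 - A)⁻¹ p' q := by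
          rw [← Finset.sum_mul, hrow]
    _ ≤ ∑ r, A p' r * (1 - A)⁻¹ r q :=
          Finset.sum_le_sum fun r _ => mul_le_mul_of_nonneg_left (hmin r (mem_univ r)) (hApos p' r)
    _ ≤ (1 - A)⁻¹ p' q := by
          rw [hCentry p' q]
          have : (0:ℝ) ≤ if p' = q then (1:ℝ) else 0 := by positivity
          linarith
  have h0 : 0 ≤ (1 - A)⁻¹ p' q := by nlinarith [hb0 p']
  exact le_trans h0 (hmin p (mem_univ p))

lemma aux_inv_diag (m : ℕ) (A : Matrix (Fin m) (Fin m) ℝ) (b0 : Fin m → ℝ)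
    (hApos : ∀ p q, 0 ≤ A p q) (hb0 : ∀ p, 0 < b0 p)
    (hrow : ∀ p, ∑ q, A p q = 1 - b0 p) (hm : 0 < m) :
    ∀ p, 1 ≤ (1 - A)⁻¹ p p := by
  intro p
  rw [aux_inv_entry m A b0 hApos hb0 hrow p p]
  have : 0 ≤ ∑ r, A p r * (1 - A)⁻¹ r p :=
    Finset.sum_nonneg fun r _ => mul_nonneg (hApos p r) (aux_inv_nonneg m A b0 hApos hb0 hrow hm r p)
  simp only [if_pos rfl, if_true]
  linarith


theorem welfare_max_first_order_condition
    (m l : ℕ) (cat : Fin m → Fin l) (hcat : Function.Surjective cat)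
    (a0 lam c : Fin m → ℝ) (ha0 : ∀ i, 0 < a0 i) (hlam : ∀ i, 0 < lam i)
    (b0 : Fin m → ℝ) (b : Fin m → Fin l → ℝ)
    (hb0 : ∀ i, 0 < b0 i) (hb : ∀ i ℓ, 0 ≤ b i ℓ)
    (hbsum : ∀ i, b0 i + ∑ ℓ, b i ℓ = 1)
    (A : Matrix (Fin m) (Fin m) ℝ) (hAF : A ∈ Feasible m l cat b)
    (hmax : ∀ A' ∈ Feasible m l cat b, W m a0 lam c A' ≤ W m a0 lam c A)
    (i : Fin m) (ℓ : Fin l) (j k : Fin m) (hj : cat j = ℓ) (hk : cat k = ℓ)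
    (hAij : 0 < A i j) (hAik : 0 < A i k) :
    ((1 - A)⁻¹.mulVec (uvec m lam c A)) j + Real.log (A i j)
      = ((1 - A)⁻¹.mulVec (uvec m lam c A)) k + Real.log (A i k) := by
  classical
  by_cases hjk : j = k
  · subst hjk; rfl
  obtain ⟨hApos, hAsum⟩ := hAF
  have hm : 0 < m := i.pos
  -- row sums of A
  have hrow : ∀ p, ∑ q, A p q = 1 - b0 p := by
    intro p
    have h1 : ∑ ℓ' : Fin l, ∑ q ∈ univ.filter (fun q => cat q = ℓ'), A p q = ∑ q, A p q := by
      rw [Finset.sum_fiberwise_eq_sum_filter]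
      simp
    have h2 : ∑ ℓ' : Fin l, ∑ q ∈ univ.filter (fun q => cat q = ℓ'), A p q = ∑ ℓ', b p ℓ' :=
      Finset.sum_congr rfl fun ℓ' _ => hAsum p ℓ'
    have := hbsum p
    rw [h1] at h2
    linarith
  set C : Matrix (Fin m) (Fin m) ℝ := (1 - A)⁻¹ with hCdef
  have hdet : (1 - A).det ≠ 0 := aux_det_ne m A b0 hApos hb0 hrow
  have hunit : IsUnit (1 - A).det := isUnit_iff_ne_zero.mpr hdet
  have hCid' : C * (1 - A) = 1 := Matrix.nonsing_inv_mul _ hunit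
  have hCnn : ∀ p q, 0 ≤ C p q := aux_inv_nonneg m A b0 hApos hb0 hrow hm
  have hCdiag : ∀ p, 1 ≤ C p p := aux_inv_diag m A b0 hApos hb0 hrow hm
  set w : Fin m → ℝ := fun q => ∑ p, a0 p * C p q with hwdef
  have hdot : ∀ x : Fin m → ℝ, a0 ⬝ᵥ C.mulVec x = ∑ q, w q * x q := by
    intro x
    simp only [dotProduct, Matrix.mulVec, Finset.mul_sum, Finset.sum_mul, hwdef]
    rw [Finset.sum_comm]
    exact Finset.sum_congr rfl fun p _ => Finset.sum_congr rfl fun q _ => by ring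
  have hwpos : 0 < w i := by
    simp only [hwdef]
    have h1 : a0 i * C i i ≤ ∑ p, a0 p * C p i :=
      Finset.single_le_sum (fun p _ => mul_nonneg (ha0 p).le (hCnn p i)) (mem_univ i)
    nlinarith [ha0 i, hCdiag i]
  -- perturbation matrix
  set E : Matrix (Fin m) (Fin m) ℝ :=
    fun p q => if p = i then ((if q = k then (1:ℝ) else 0) - (if q = j then 1 else 0)) else 0
    with hEdef
  set δ0 : ℝ := min (A i j) (A i k) with hδ0def
  have hδ0 : 0 < δ0 := lt_min hAij hAik
  -- feasibility of perturbations
  have hEval : ∀ p q, E p q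
      = (if p = i then ((if q = k then (1:ℝ) else 0) - (if q = j then 1 else 0)) else 0) :=
    fun p q => rfl
  have hkj : ¬(k = j) := fun h => hjk h.symm
  have hfeas : ∀ t : ℝ, |t| < δ0 → A + t • E ∈ Feasible m l cat b := by
    intro t ht
    rw [abs_lt] at ht
    have hδj : δ0 ≤ A i j := min_le_left _ _
    have hδk : δ0 ≤ A i k := min_le_right _ _
    constructor
    · intro p q
      have : (A + t • E) p q = A p q + t * E p q := by
        simp [Matrix.add_apply, Matrix.smul_apply, smul_eq_mul]
      rw [this, hEval]
      by_cases hp : p = i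
      · by_cases hq : q = k
        · simp only [hp, hq, eq_self_iff_true, if_true, if_neg hkj]
          nlinarith [ht.1, hApos i k]
        · by_cases hq' : q = j
          · simp only [hp, hq', eq_self_iff_true, if_true, if_neg hjk]
            nlinarith [ht.2, hApos i j]
          · simp only [hp, eq_self_iff_true, if_true, if_neg hq, if_neg hq']
            simpa using hApos i q
      · simp only [if_neg hp]
        simpa using hApos p q
    · intro p ℓ'
      have hsplit : ∑ q ∈ univ.filter (fun q => cat q = ℓ'), (A + t • E) p q
          = (∑ q ∈ univ.filter (fun q => cat q = ℓ'), A p q)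
            + t * ∑ q ∈ univ.filter (fun q => cat q = ℓ'), E p q := by
        rw [Finset.mul_sum, ← Finset.sum_add_distrib]
        exact Finset.sum_congr rfl fun q _ => by
          simp [Matrix.add_apply, Matrix.smul_apply, smul_eq_mul]
      rw [hsplit, hAsum p ℓ']
      have hEsum : ∑ q ∈ univ.filter (fun q => cat q = ℓ'), E p q = 0 := by
        by_cases hp : p = i
        · simp only [hEval, hp, eq_self_iff_true, if_true]
          rw [Finset.sum_sub_distrib]
          rw [Finset.sum_ite_eq' (univ.filter (fun q => cat q = ℓ')) k (fun _ => (1:ℝ))]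
          rw [Finset.sum_ite_eq' (univ.filter (fun q => cat q = ℓ')) j (fun _ => (1:ℝ))]
          simp [Finset.mem_filter, hj, hk]
        · simp [hEval, hp]
      rw [hEsum]; ring
  -- the perturbed welfare function
  set φ : ℝ → ℝ := fun t => W m a0 lam c (A + t • E) with hφdef
  have hA0 : A + (0:ℝ) • E = A := by simp
  have hlocmax : IsLocalMax φ 0 := by
    filter_upwards [Metric.ball_mem_nhds (0:ℝ) hδ0] with t ht
    have ht' : |t| < δ0 := by simpa [Real.dist_eq] using ht
    have := hmax _ (hfeas t ht')
    simpa [hφdef, hA0] using this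
  -- derivative of the entropy-corrected productivity entries
  have hud : ∀ q, HasDerivAt (fun t : ℝ => uvec m lam c (A + t • E) q)
      (∑ r, (Real.log (A q r) + 1) * E q r) (0:ℝ) := by
    intro q
    have hterm : ∀ r, HasDerivAt
        (fun t => (A q r + t * E q r) * Real.log (A q r + t * E q r))
        ((Real.log (A q r) + 1) * E q r) 0 := by
      intro r
      by_cases hE0 : E q r = 0
      · simp only [hE0, mul_zero, add_zero]
        exact hasDerivAt_const _ _
      · have hqA : A q r ≠ 0 := by
          have h1 : q = i := by
            by_contra h
            exact hE0 (by simp [hEval, h])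
          have h2 : r = j ∨ r = k := by
            by_contra h
            push_neg at h
            exact hE0 (by simp [hEval, h1, h.1, h.2])
          rcases h2 with h2 | h2
          · rw [h1, h2]; exact ne_of_gt hAij
          · rw [h1, h2]; exact ne_of_gt hAik
        have h1 : HasDerivAt (fun t : ℝ => A q r + t * E q r) (E q r) 0 := by
          simpa using ((hasDerivAt_id (0:ℝ)).mul_const (E q r)).const_add (A q r)
        have h2 : HasDerivAt (fun x : ℝ => x * Real.log x)
            (Real.log (A q r + 0 * E q r) + 1) (A q r + 0 * E q r) :=
          Real.hasDerivAt_mul_log (by simpa using hqA)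
        have h3 := h2.comp 0 h1
        simpa [Function.comp_def] using h3
    have hsum : HasDerivAt
        (fun t : ℝ => ∑ r, (A q r + t * E q r) * Real.log (A q r + t * E q r))
        (∑ r, (Real.log (A q r) + 1) * E q r) (0:ℝ) :=
      HasDerivAt.fun_sum (fun r _ => hterm r)
    have heq : (fun t : ℝ => uvec m lam c (A + t • E) q)
        = fun t : ℝ => Real.log (lam q) + c q
            + ∑ r, (A q r + t * E q r) * Real.log (A q r + t * E q r) := by
      funext t
      simp [uvec, Matrix.add_apply, Matrix.smul_apply, smul_eq_mul]
    rw [heq]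
    exact hsum.const_add _
  -- the derivative coefficients
  have hdq : ∀ q, q ≠ i → (∑ r, (Real.log (A q r) + 1) * E q r) = 0 := by
    intro q hq
    refine Finset.sum_eq_zero fun r _ => ?_
    simp [hEval, hq]
  have hdi : (∑ r, (Real.log (A i r) + 1) * E i r)
      = Real.log (A i k) - Real.log (A i j) := by
    simp only [hEval, eq_self_iff_true, if_true, mul_sub, mul_ite, mul_one, mul_zero]
    rw [Finset.sum_sub_distrib, Finset.sum_ite_eq' univ k, Finset.sum_ite_eq' univ j]
    simp
  -- derivative of ψ
  set ψ : ℝ → ℝ := fun t => ∑ q, w q * uvec m lam c (A + t • E) q with hψdef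
  have hψ : HasDerivAt ψ (w i * (Real.log (A i k) - Real.log (A i j))) (0:ℝ) := by
    have hsum : HasDerivAt
        (fun t : ℝ => ∑ q, w q * uvec m lam c (A + t • E) q)
        (∑ q, w q * ∑ r, (Real.log (A q r) + 1) * E q r) (0:ℝ) :=
      HasDerivAt.fun_sum (fun q _ => (hud q).const_mul (w q))
    have hval : (∑ q, w q * ∑ r, (Real.log (A q r) + 1) * E q r)
        = w i * (Real.log (A i k) - Real.log (A i j)) := by
      rw [Finset.sum_eq_single_of_mem i (mem_univ i)
        (fun q _ hq => by rw [hdq q hq, mul_zero]), hdi]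
    rw [hψdef]
    exact hval ▸ hsum
  -- the correction term g
  set g : ℝ → ℝ :=
    fun t => ∑ q, w q *
      (E.mulVec ((1 - (A + t • E))⁻¹.mulVec (uvec m lam c (A + t • E)))) q
    with hgdef
  -- resolvent identity
  have hresolv : ∀ t : ℝ, (1 - (A + t • E)).det ≠ 0 → φ t = ψ t + t * g t := by
    intro t hdt
    have hut : IsUnit (1 - (A + t • E)).det := isUnit_iff_ne_zero.mpr hdt
    have hB : 1 - (A + t • E) = (1 - A) - t • E := by abel
    have h1 : C * (1 - (A + t • E)) = 1 - t • (C * E) := by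
      rw [hB, Matrix.mul_sub, hCid', Matrix.mul_smul]
    have h2 : (1 - (A + t • E)) * (1 - (A + t • E))⁻¹ = 1 :=
      Matrix.mul_nonsing_inv _ hut
    have h3 : (1 - (A + t • E))⁻¹ = C + t • (C * (E * (1 - (A + t • E))⁻¹)) := by
      have h4 : C * (1 - (A + t • E)) * (1 - (A + t • E))⁻¹
          = (1 - t • (C * E)) * (1 - (A + t • E))⁻¹ := by rw [h1]
      rw [Matrix.mul_assoc, h2, Matrix.mul_one, Matrix.sub_mul, Matrix.one_mul,
        Matrix.smul_mul, Matrix.mul_assoc] at h4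
      exact sub_eq_iff_eq_add.mp h4.symm
    have hφt : φ t = a0 ⬝ᵥ ((1 - (A + t • E))⁻¹.mulVec (uvec m lam c (A + t • E))) := rfl
    rw [hφt, h3, Matrix.add_mulVec, Matrix.smul_mulVec, dotProduct_add,
      dotProduct_smul, smul_eq_mul, ← Matrix.mulVec_mulVec, ← Matrix.mulVec_mulVec,
      hdot, hdot]
  -- eventual invertibility near 0
  have hdet0 : (1 - (A + (0:ℝ) • E)).det ≠ 0 := by
    rw [hA0]; exact hdet
  have hcontB : Continuous fun t : ℝ => 1 - (A + t • E) :=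
    continuous_const.sub (continuous_const.add (continuous_id.smul continuous_const))
  have hcontdet : Continuous fun t : ℝ => (1 - (A + t • E)).det := hcontB.matrix_det
  have hev : ∀ᶠ t in nhds (0:ℝ), (1 - (A + t • E)).det ≠ 0 :=
    hcontdet.continuousAt.eventually_ne hdet0
  -- continuity ingredients
  have hu_cont : ∀ s, Continuous (fun t : ℝ => uvec m lam c (A + t • E) s) := by
    intro s
    have heq : (fun t : ℝ => uvec m lam c (A + t • E) s)
        = fun t => Real.log (lam s) + c s
            + ∑ r, (A s r + t * E s r) * Real.log (A s r + t * E s r) := by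
      funext t; simp [uvec, Matrix.add_apply, Matrix.smul_apply, smul_eq_mul]
    rw [heq]
    refine continuous_const.add (continuous_finset_sum _ fun r _ => ?_)
    exact Real.continuous_mul_log.comp (continuous_const.add (continuous_id.mul continuous_const))
  have hBinv : ∀ r s, ContinuousAt (fun t : ℝ => (1 - (A + t • E))⁻¹ r s) 0 := by
    intro r s
    have hfun : (fun t : ℝ => (1 - (A + t • E))⁻¹ r s)
        = fun t => ((1 - (A + t • E)).det)⁻¹ * (1 - (A + t • E)).adjugate r s := by
      funext t
      rw [Matrix.inv_def, Ring.inverse_eq_inv]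
      simp [Matrix.smul_apply, smul_eq_mul]
    rw [hfun]
    have hadj : Continuous fun t : ℝ => (1 - (A + t • E)).adjugate r s :=
      (continuous_apply s).comp ((continuous_apply r).comp hcontB.matrix_adjugate)
    exact (hcontdet.continuousAt.inv₀ hdet0).mul hadj.continuousAt
  have hgcont : ContinuousAt g 0 := by
    have hg2 : g = fun t => ∑ q, w q * ∑ r, E q r
        * ∑ s, (1 - (A + t • E))⁻¹ r s * uvec m lam c (A + t • E) s := by
      funext t
      simp only [hgdef, Matrix.mulVec, dotProduct]
    rw [hg2]
    refine tendsto_finset_sum _ fun q _ => Filter.Tendsto.const_mul _ ?_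
    refine tendsto_finset_sum _ fun r _ => Filter.Tendsto.const_mul _ ?_
    refine tendsto_finset_sum _ fun s _ => ?_
    exact (hBinv r s).mul (hu_cont s).continuousAt
  -- derivative of t * g t
  have htg : HasDerivAt (fun t : ℝ => t * g t) (g 0) (0:ℝ) := by
    rw [hasDerivAt_iff_tendsto_slope]
    have hev' : g =ᶠ[nhdsWithin (0:ℝ) {(0:ℝ)}ᶜ] slope (fun t : ℝ => t * g t) 0 := by
      filter_upwards [self_mem_nhdsWithin] with t ht
      have ht' : t ≠ 0 := ht
      rw [slope_def_field]
      field_simp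
      ring
    exact Filter.Tendsto.congr' hev' (hgcont.tendsto.mono_left nhdsWithin_le_nhds)
  -- total derivative of φ at 0 and first-order condition
  have hφderiv : HasDerivAt φ
      (w i * (Real.log (A i k) - Real.log (A i j)) + g 0) (0:ℝ) := by
    have hρ := hψ.add htg
    exact hρ.congr_of_eventuallyEq (by filter_upwards [hev] with t ht using hresolv t ht)
  have hzero := hlocmax.hasDerivAt_eq_zero hφderiv
  -- compute g 0
  have hEact : ∀ v : Fin m → ℝ, ∑ q, w q * (E.mulVec v) q = w i * (v k - v j) := by
    intro v
    have h1 : ∀ q, (E.mulVec v) q = if q = i then v k - v j else 0 := by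
      intro q
      simp only [Matrix.mulVec, dotProduct, hEval]
      by_cases hq : q = i
      · simp only [hq, eq_self_iff_true, if_true, sub_mul, ite_mul, one_mul, zero_mul]
        rw [Finset.sum_sub_distrib, Finset.sum_ite_eq' univ k, Finset.sum_ite_eq' univ j]
        simp
      · simp [hq]
    calc ∑ q, w q * (E.mulVec v) q
        = ∑ q, w q * (if q = i then v k - v j else 0) :=
          Finset.sum_congr rfl fun q _ => by rw [h1]
    _ = w i * (v k - v j) := by
          simp only [mul_ite, mul_zero]
          rw [Finset.sum_ite_eq' univ i]
          simp
  have hg0 : g 0 = w i * (C.mulVec (uvec m lam c A) k - C.mulVec (uvec m lam c A) j) := by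
    have hB0 : (1 - (A + (0:ℝ) • E))⁻¹ = C := by rw [hA0]
    have : g 0 = ∑ q, w q * (E.mulVec (C.mulVec (uvec m lam c A))) q := by
      simp only [hgdef, hA0, hB0]
      rfl
    rw [this, hEact]
  -- final algebra
  rw [hg0] at hzero
  have h2 : w i * ((C.mulVec (uvec m lam c A) k + Real.log (A i k))
      - (C.mulVec (uvec m lam c A) j + Real.log (A i j))) = 0 := by
    ring_nf
    ring_nf at hzero
    linarith
  rcases mul_eq_zero.mp h2 with h3 | h3
  · exact absurd h3 (ne_of_gt hwpos)
  · linarith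

end
end

section
/- For every n ≥ 1, L ≥ 1, consumption shares (a_{0,ℓ})_{ℓ=1}^L with a_{0,ℓ} > 0 and Σ_ℓ a_{0,ℓ} = 1, and every γ ∈ (0,1], there exists δ > 0 with the following property: for every requirement system b with b_{ℓ,0} ≥ γ and 0 ≤ ε_ℓ := 1 − b_{ℓ,0} − Σ_{ℓ'=1}^L b_{ℓ,ℓ'} ≤ δ for every ℓ, and for every partition 𝒬 of {1,…,n}, the 𝒬-clustered strategy profile a^𝒬 (firm i of category ℓ plays a_{i,0} = b_{ℓ,0} and input weights given by the rows of A^𝒬) is a Nash equilibrium of the replicate game 𝒢^n(a_0,b). -/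
/-!
Replicate economy with n countries and L categories. Firms are pairs
(category, country) in `Fin L × Fin n`. Consumption shares `a0 ℓ` with the
household spending `a0 ℓ / n` on each firm of category ℓ; requirements
`b0 ℓ` = b_{ℓ,0} and `B ℓ ℓ'` = b_{ℓ,ℓ'}; ε_ℓ = 1 − b_{ℓ,0} − Σ_{ℓ'} b_{ℓ,ℓ'}.
A partition 𝒬 of the countries is modeled as a `Setoid (Fin n)`; `AQ B Q` is
the 𝒬-clustered production network A^𝒬. Strategy sets, Ã_M and payoffs of
the replicate game 𝒢^n(a_0,b) are as in the paper.

STATEMENT 9: for all n, L, consumption shares and γ ∈ (0,1] there is δ > 0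
such that for every requirement system with b_{ℓ,0} ≥ γ and 0 ≤ ε_ℓ ≤ δ and
every partition 𝒬, the 𝒬-clustered profile is a Nash equilibrium of
𝒢^n(a_0,b).
-/

noncomputable section

open Matrix Finset

attribute [local instance] Classical.propDecidable

/-- Firms: (category, country). -/
abbrev Firm (L n : ℕ) := Fin L × Fin n

/-- Cardinality of the cluster (equivalence class) of country `c`. -/
def clusterCard {n : ℕ} (Q : Setoid (Fin n)) (c : Fin n) : ℕ :=
  (univ.filter fun c' => Q.r c c').card

/-- The 𝒬-clustered production network A^𝒬. -/
def AQ {L n : ℕ} (B : Fin L → Fin L → ℝ) (Q : Setoid (Fin n)) :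
    Matrix (Firm L n) (Firm L n) ℝ :=
  Matrix.of fun i j =>
    if i.1 = j.1 then (if i = j then B i.1 i.1 else 0)
    else if Q.r i.2 j.2 then B i.1 j.1 / (clusterCard Q i.2 : ℝ) else 0

/-- Household consumption shares on firms: a0 ℓ / n. -/
def a0n {L : ℕ} (n : ℕ) (a0 : Fin L → ℝ) : Firm L n → ℝ :=
  fun i => a0 i.1 / n

/-- ε_ℓ := 1 − b_{ℓ,0} − Σ_{ℓ'} b_{ℓ,ℓ'}. -/
def epsR {L : ℕ} (b0 : Fin L → ℝ) (B : Fin L → Fin L → ℝ) (ℓ : Fin L) : ℝ :=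
  1 - b0 ℓ - ∑ ℓ', B ℓ ℓ'

/-- Strategy set of firm i in the replicate game. -/
def StratR {L n : ℕ} (B : Fin L → Fin L → ℝ) (i : Firm L n) :
    Set (Firm L n → ℝ) :=
  { x | (∀ j, 0 ≤ x j) ∧ ∀ ℓ' : Fin L, ∑ c' : Fin n, x (ℓ', c') = B i.1 ℓ' }

/-- The matrix Ã_M of a profile: (Ã_M)_{j,i} = a_{i,j} + ε_{ℓ(i)} a_{0,ℓ(j)}/n. -/
def AtMR {L n : ℕ} (a0 b0 : Fin L → ℝ) (B : Fin L → Fin L → ℝ)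
    (a : Firm L n → Firm L n → ℝ) : Matrix (Firm L n) (Firm L n) ℝ :=
  Matrix.of fun j i => a i j + epsR b0 B i.1 * (a0 j.1 / n)

/-- Payoff π_i(a) = ε_{ℓ(i)} ((I − Ã_M)⁻¹ a_0^n)_i. -/
def payoffR {L n : ℕ} (a0 b0 : Fin L → ℝ) (B : Fin L → Fin L → ℝ)
    (i : Firm L n) (a : Firm L n → Firm L n → ℝ) : ℝ :=
  epsR b0 B i.1 * ((1 - AtMR a0 b0 B a)⁻¹.mulVec (a0n n a0) i)

/-- Column sums of powers of a nonneg matrix. -/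
lemma aux_pow_colsum {F : Type*} [Fintype F] [DecidableEq F]
    (N : Matrix F F ℝ) (ρ : ℝ)
    (hN : ∀ p q, 0 ≤ N p q) (hcol : ∀ q, ∑ p, N p q ≤ ρ) (hρ0 : 0 ≤ ρ) :
    ∀ K : ℕ, (∀ p q, 0 ≤ (N ^ K) p q) ∧ (∀ q, ∑ p, (N ^ K) p q ≤ ρ ^ K) := by
  intro K
  induction K with
  | zero =>
    constructor
    · intro p q
      simp [Matrix.one_apply]
      split <;> norm_num
    · intro q
      simp [Matrix.one_apply, Finset.sum_ite_eq' (univ : Finset F) q]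
  | succ K ih =>
    have h1 : ∀ p q, 0 ≤ (N ^ (K+1)) p q := by
      intro p q
      rw [pow_succ', Matrix.mul_apply]
      exact Finset.sum_nonneg fun r _ => mul_nonneg (hN p r) (ih.1 r q)
    refine ⟨h1, fun q => ?_⟩
    have : ∑ p, (N ^ (K+1)) p q = ∑ r, (∑ p, N p r) * (N ^ K) r q := by
      simp_rw [pow_succ', Matrix.mul_apply, Finset.sum_mul]
      rw [Finset.sum_comm]
    rw [this]
    calc ∑ r, (∑ p, N p r) * (N ^ K) r q
        ≤ ∑ r, ρ * (N ^ K) r q := by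
          refine Finset.sum_le_sum fun r _ => ?_
          exact mul_le_mul_of_nonneg_right (hcol r) (ih.1 r q)
      _ = ρ * ∑ r, (N ^ K) r q := by rw [Finset.mul_sum]
      _ ≤ ρ * ρ ^ K := mul_le_mul_of_nonneg_left (ih.2 q) hρ0
      _ = ρ ^ (K+1) := (pow_succ' ρ K).symm

/-- Neumann-series facts: invertibility and entrywise nonnegativity of
`(1 - N)⁻¹` for a nonnegative matrix with column sums at most `ρ < 1`. -/
lemma aux_neumann {F : Type*} [Fintype F] [DecidableEq F] [Nonempty F]
    (N : Matrix F F ℝ) (ρ : ℝ) (hρ0 : 0 ≤ ρ) (hρ : ρ < 1)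
    (hN : ∀ p q, 0 ≤ N p q) (hcol : ∀ q, ∑ p, N p q ≤ ρ) :
    IsUnit (1 - N).det ∧ ∀ p q, 0 ≤ (1 - N)⁻¹ p q := by
  have hdet : (1 - N).det ≠ 0 := by
    rw [Ne, ← Matrix.exists_vecMul_eq_zero_iff]
    rintro ⟨v, hv, hmul⟩
    apply hv
    have hvq : ∀ q, v q = ∑ p, v p * N p q := by
      intro q
      have h1 : v ᵥ* (1 - N) = v ᵥ* 1 - v ᵥ* N := by
        ext j; simp [Matrix.vecMul, dotProduct, Matrix.sub_apply, mul_sub,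
          Finset.sum_sub_distrib, Matrix.one_apply, mul_ite,
          Finset.sum_ite_eq' (univ : Finset F) j]
      have := congrFun (h1 ▸ hmul) q
      simp [Matrix.vecMul_one, sub_eq_zero] at this
      rw [this]
      simp [Matrix.vecMul, dotProduct]
    obtain ⟨q0, -, hq0⟩ := Finset.exists_max_image (univ : Finset F) (fun q => |v q|)
      ⟨Classical.arbitrary F, mem_univ _⟩
    have hb : |v q0| ≤ |v q0| * ρ := by
      calc |v q0| = |∑ p, v p * N p q0| := by rw [← hvq]
        _ ≤ ∑ p, |v p * N p q0| := Finset.abs_sum_le_sum_abs _ _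
        _ = ∑ p, |v p| * N p q0 := by
            refine Finset.sum_congr rfl fun p _ => ?_
            rw [abs_mul, abs_of_nonneg (hN p q0)]
        _ ≤ ∑ p, |v q0| * N p q0 := by
            refine Finset.sum_le_sum fun p _ => ?_
            exact mul_le_mul_of_nonneg_right (hq0 p (mem_univ p)) (hN p q0)
        _ = |v q0| * ∑ p, N p q0 := by rw [Finset.mul_sum]
        _ ≤ |v q0| * ρ := mul_le_mul_of_nonneg_left (hcol q0) (abs_nonneg _)
    have h0 : |v q0| = 0 := by nlinarith [abs_nonneg (v q0)]
    ext q
    have := hq0 q (mem_univ q)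
    rw [h0] at this
    simpa using (abs_nonneg (v q)).antisymm this |>.symm
  refine ⟨isUnit_iff_ne_zero.mpr hdet, ?_⟩
  have hdet' : IsUnit (1 - N).det := isUnit_iff_ne_zero.mpr hdet
  obtain ⟨hpowpos, hpowcol⟩ :
      (∀ K : ℕ, ∀ p q, 0 ≤ (N ^ K) p q) ∧ (∀ K : ℕ, ∀ q, ∑ p, (N ^ K) p q ≤ ρ ^ K) :=
    ⟨fun K => (aux_pow_colsum N ρ hN hcol hρ0 K).1, fun K => (aux_pow_colsum N ρ hN hcol hρ0 K).2⟩
  set S := (1 - N)⁻¹ with hSdef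
  have hS : (1 - N) * S = 1 := Matrix.mul_nonsing_inv _ hdet'
  have hstep : S = 1 + N * S := by
    have h2 : 1 * S - N * S = 1 := by rw [← Matrix.sub_mul]; exact hS
    rw [Matrix.one_mul] at h2
    exact sub_eq_iff_eq_add.mp h2
  have hiter : ∀ K : ℕ, S = (∑ k ∈ Finset.range K, N ^ k) + N ^ K * S := by
    intro K
    induction K with
    | zero => simp
    | succ K ih =>
      conv_lhs => rw [ih]
      rw [Finset.sum_range_succ]
      have : N ^ K * S = N ^ K + N ^ (K+1) * S := by
        conv_lhs => rw [hstep]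
        rw [Matrix.mul_add, Matrix.mul_one, ← Matrix.mul_assoc, ← pow_succ]
      rw [this]; abel
  set C : ℝ := ∑ r, ∑ q', |S r q'| with hC
  have habs : ∀ r q, |S r q| ≤ C := by
    intro r q
    calc |S r q| ≤ ∑ q', |S r q'| :=
          Finset.single_le_sum (f := fun q' => |S r q'|) (fun q' _ => abs_nonneg _) (mem_univ q)
      _ ≤ C := Finset.single_le_sum (f := fun r => ∑ q', |S r q'|)
          (fun r _ => Finset.sum_nonneg fun _ _ => abs_nonneg _) (mem_univ r)
  intro p q
  have hbound : ∀ K : ℕ, -((Fintype.card F : ℝ) * C * ρ ^ K) ≤ S p q := by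
    intro K
    have hpart : 0 ≤ (∑ k ∈ Finset.range K, N ^ k) p q := by
      rw [Matrix.sum_apply]
      exact Finset.sum_nonneg fun k _ => hpowpos k p q
    have hentry : ∀ r, (N ^ K) p r ≤ ρ ^ K := fun r =>
      le_trans (Finset.single_le_sum (fun p' _ => hpowpos K p' r) (mem_univ p)) (hpowcol K r)
    have htail : -((Fintype.card F : ℝ) * C * ρ ^ K) ≤ (N ^ K * S) p q := by
      rw [Matrix.mul_apply]
      calc -((Fintype.card F : ℝ) * C * ρ ^ K) = ∑ _r : F, -(C * ρ ^ K) := by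
            rw [Finset.sum_const]; simp [Finset.card_univ]; ring
        _ ≤ ∑ r, (N ^ K) p r * S r q := by
            refine Finset.sum_le_sum fun r _ => ?_
            have h1 : -(C * ρ ^ K) ≤ -((N ^ K) p r * |S r q|) := by
              rw [neg_le_neg_iff]
              exact (mul_le_mul (hentry r) (habs r q) (abs_nonneg _)
                (pow_nonneg hρ0 K)).trans_eq (mul_comm _ _)
            refine le_trans h1 ?_
            rw [neg_mul_eq_mul_neg]
            exact mul_le_mul_of_nonneg_left (neg_abs_le _) (hpowpos K p r)
    have heq := congrFun (congrFun (hiter K) p) q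
    rw [Matrix.add_apply] at heq
    rw [heq]
    linarith
  have hlim : Filter.Tendsto (fun K : ℕ => -((Fintype.card F : ℝ) * C * ρ ^ K)) Filter.atTop (nhds 0) := by
    have := (tendsto_pow_atTop_nhds_zero_of_lt_one hρ0 hρ).const_mul ((Fintype.card F : ℝ) * C)
    simpa using this.neg
  exact le_of_tendsto' hlim hbound

theorem clustered_profile_is_nash
    (n L : ℕ) (hn : 1 ≤ n) (hL : 1 ≤ L)
    (a0 : Fin L → ℝ) (ha0 : ∀ ℓ, 0 < a0 ℓ) (ha0sum : ∑ ℓ, a0 ℓ = 1)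
    (γ : ℝ) (hγ : γ ∈ Set.Ioc (0 : ℝ) 1) :
    ∃ δ : ℝ, 0 < δ ∧
      ∀ (b0 : Fin L → ℝ) (B : Fin L → Fin L → ℝ),
        (∀ ℓ ℓ', 0 ≤ B ℓ ℓ') →
        (∀ ℓ, γ ≤ b0 ℓ) →
        (∀ ℓ, 0 ≤ epsR b0 B ℓ ∧ epsR b0 B ℓ ≤ δ) →
        ∀ Q : Setoid (Fin n),
          (∀ i : Firm L n, (fun j => AQ B Q i j) ∈ StratR B i)
          ∧ ∀ i : Firm L n, ∀ x ∈ StratR B i,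
              payoffR a0 b0 B i
                  (Function.update (fun i' j => AQ B Q i' j) i x)
                ≤ payoffR a0 b0 B i (fun i' j => AQ B Q i' j) := by
  obtain ⟨hγ0, hγ1⟩ := hγ
  refine ⟨1, one_pos, ?_⟩
  intro b0 B hB hb0 hε Q
  have hn0 : (0:ℝ) < n := by exact_mod_cast Nat.lt_of_lt_of_le Nat.zero_lt_one hn
  have hBsum : ∀ m, ∑ m', B m m' = 1 - b0 m - epsR b0 B m := by
    intro m; unfold epsR; ring
  have hBrow : ∀ m, ∑ m', B m m' ≤ 1 - γ := by
    intro m; have h1 := (hε m).1; have h2 := hb0 m; rw [hBsum]; linarith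
  have hBmm : ∀ m, B m m ≤ 1 - γ := fun m =>
    le_trans (Finset.single_le_sum (fun m' _ => hB m m') (mem_univ m)) (hBrow m)
  have hgap : ∀ m, 0 < 1 - B m m := fun m => by linarith [hBmm m]
  have hrefl : ∀ d, Q.r d d := fun d => Q.refl' d
  have hccpos : ∀ d, (0:ℝ) < (clusterCard Q d : ℝ) := by
    intro d
    have : d ∈ univ.filter fun c' => Q.r d c' := by
      simp only [mem_filter, mem_univ, true_and]; exact hrefl d
    exact_mod_cast Finset.card_pos.mpr ⟨d, this⟩
  have hclassEq : ∀ {d d' : Fin n}, Q.r d d' →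
      (univ.filter fun x => Q.r d x) = (univ.filter fun x => Q.r d' x) := by
    intro d d' h
    ext y
    simp only [mem_filter, mem_univ, true_and]
    exact ⟨fun hy => Q.trans' (Q.symm' h) hy, fun hy => Q.trans' h hy⟩
  -- Part 1: the clustered profile lies in the strategy sets.
  have part1 : ∀ i : Firm L n, (fun j => AQ B Q i j) ∈ StratR B i := by
    intro i
    constructor
    · intro j
      simp only [AQ, Matrix.of_apply]
      split_ifs with h1 h2 h3
      · exact hB _ _
      · exact le_refl 0
      · exact div_nonneg (hB _ _) (hccpos i.2).le
      · exact le_refl 0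
    · intro ℓ'
      by_cases hm : i.1 = ℓ'
      · subst hm
        have h5 : ∀ c' : Fin n, AQ B Q i (i.1, c') = if i.2 = c' then B i.1 i.1 else 0 := by
          intro c'
          simp [AQ, Prod.ext_iff]
        simp only [h5]
        rw [Finset.sum_ite_eq (univ : Finset (Fin n)) i.2 (fun _ => B i.1 i.1)]
        simp
      · have : ∀ c' : Fin n, AQ B Q i (ℓ', c')
            = if Q.r i.2 c' then B i.1 ℓ' / (clusterCard Q i.2 : ℝ) else 0 := by
          intro c'
          simp only [AQ, Matrix.of_apply, if_neg hm]
        simp only [this]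
        rw [← Finset.sum_filter, Finset.sum_const, nsmul_eq_mul]
        have hk : ((univ.filter fun c' => Q.r i.2 c').card : ℝ) = (clusterCard Q i.2 : ℝ) := rfl
        rw [hk]
        rw [← mul_div_assoc]
        exact mul_div_cancel_left₀ _ ((hccpos i.2).ne')
  refine ⟨part1, ?_⟩
  intro i x hx
  obtain ⟨ℓ, c⟩ := i
  -- the two profiles
  set ab : Firm L n → Firm L n → ℝ := fun i' j => AQ B Q i' j with hab
  set au : Firm L n → Firm L n → ℝ := Function.update ab (ℓ, c) x with hau
  have haustrat : ∀ i', au i' ∈ StratR B i' := by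
    intro i'
    by_cases h : i' = (ℓ, c)
    · subst h; rw [hau, Function.update_self]; exact hx
    · rw [hau, Function.update_of_ne h]; exact part1 i'
  have hmat : ∀ (a : Firm L n → Firm L n → ℝ), (∀ i', a i' ∈ StratR B i') →
      (∀ p q, 0 ≤ AtMR a0 b0 B a p q) ∧ (∀ q, ∑ p, AtMR a0 b0 B a p q ≤ 1 - γ) := by
    intro a ha
    constructor
    · intro p q
      simp only [AtMR, Matrix.of_apply]
      exact add_nonneg ((ha q).1 p)
        (mul_nonneg (hε q.1).1 (div_nonneg (ha0 p.1).le hn0.le))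
    · intro q
      have hsum1 : ∑ p : Firm L n, a q p = 1 - b0 q.1 - epsR b0 B q.1 := by
        rw [Fintype.sum_prod_type]
        calc ∑ m' : Fin L, ∑ c' : Fin n, a q (m', c') = ∑ m' : Fin L, B q.1 m' :=
              Finset.sum_congr rfl fun m' _ => (ha q).2 m'
          _ = _ := hBsum q.1
      have hsum2 : ∑ p : Firm L n, a0 p.1 / (n:ℝ) = 1 := by
        rw [Fintype.sum_prod_type]
        have h7 : ∀ m' : Fin L, ∑ _c' : Fin n, a0 m' / (n:ℝ) = a0 m' := by
          intro m'
          rw [Finset.sum_const, Finset.card_univ, Fintype.card_fin, nsmul_eq_mul]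
          field_simp
        rw [Finset.sum_congr rfl fun m' _ => h7 m']
        exact ha0sum
      calc ∑ p, AtMR a0 b0 B a p q
          = ∑ p : Firm L n, (a q p + epsR b0 B q.1 * (a0 p.1 / n)) := rfl
        _ = (∑ p : Firm L n, a q p) + epsR b0 B q.1 * ∑ p : Firm L n, (a0 p.1 / (n:ℝ)) := by
            rw [Finset.sum_add_distrib, Finset.mul_sum]
        _ = 1 - b0 q.1 := by rw [hsum1, hsum2]; ring
        _ ≤ 1 - γ := by linarith [hb0 q.1]
  have hne : Nonempty (Firm L n) := ⟨(⟨0, hL⟩, ⟨0, hn⟩)⟩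
  obtain ⟨hA1, hA2⟩ := hmat ab part1
  obtain ⟨hA1', hA2'⟩ := hmat au haustrat
  have hρ0 : (0:ℝ) ≤ 1 - γ := by linarith
  have hρ1 : 1 - γ < 1 := by linarith
  obtain ⟨hdet, hSpos⟩ := aux_neumann (AtMR a0 b0 B ab) (1-γ) hρ0 hρ1 hA1 hA2
  obtain ⟨hdet', -⟩ := aux_neumann (AtMR a0 b0 B au) (1-γ) hρ0 hρ1 hA1' hA2'
  set At := AtMR a0 b0 B ab with hAt
  set S := (1 - At)⁻¹ with hS
  set r : Firm L n → ℝ := fun j => S (ℓ, c) j with hr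
  have hr0 : ∀ j, 0 ≤ r j := fun j => hSpos (ℓ, c) j
  set R : ℝ := ∑ q : Firm L n, r q * (a0 q.1 / n) with hR
  set g : Fin n → Fin L → ℝ := fun d m =>
    (∑ d' ∈ univ.filter (fun y => Q.r d y), r (m, d')) / (clusterCard Q d : ℝ) with hg
  -- the master identity (★)
  have hSid : S = 1 + S * At := by
    have h2 : S * 1 - S * At = 1 := by
      rw [← Matrix.mul_sub]; exact Matrix.nonsing_inv_mul _ hdet
    rw [Matrix.mul_one] at h2
    exact sub_eq_iff_eq_add.mp h2
  have hstar : ∀ (m : Fin L) (d : Fin n),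
      r (m, d) = (if ((ℓ, c) : Firm L n) = (m, d) then (1:ℝ) else 0)
        + B m m * r (m, d) + (∑ m' ∈ univ.erase m, B m m' * g d m')
        + epsR b0 B m * R := by
    intro m d
    have h0 : r (m, d) = (if ((ℓ, c) : Firm L n) = (m, d) then (1:ℝ) else 0)
        + ∑ q : Firm L n, r q * At q (m, d) := by
      have := congrFun (congrFun hSid (ℓ, c)) (m, d)
      rw [Matrix.add_apply, Matrix.mul_apply, Matrix.one_apply] at this
      exact this
    have hAtq : ∀ q : Firm L n, At q (m, d) = AQ B Q (m, d) q + epsR b0 B m * (a0 q.1 / n) := by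
      intro q; rfl
    have h1 : ∑ q : Firm L n, r q * At q (m, d)
        = (∑ q : Firm L n, r q * AQ B Q (m, d) q) + epsR b0 B m * R := by
      simp_rw [hAtq, mul_add]
      rw [Finset.sum_add_distrib]
      congr 1
      rw [hR, Finset.mul_sum]
      exact Finset.sum_congr rfl fun q _ => by ring
    have h2 : ∑ q : Firm L n, r q * AQ B Q (m, d) q
        = B m m * r (m, d) + ∑ m' ∈ univ.erase m, B m m' * g d m' := by
      rw [Fintype.sum_prod_type]
      rw [← Finset.add_sum_erase (univ : Finset (Fin L))
        (fun m' => ∑ d' : Fin n, r (m', d') * AQ B Q (m, d) (m', d')) (mem_univ m)]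
      congr 1
      · -- diagonal-category block
        have h3 : ∀ d' : Fin n, AQ B Q (m, d) (m, d') = if d = d' then B m m else 0 := by
          intro d'; simp [AQ, Prod.ext_iff]
        simp_rw [h3, mul_ite, mul_zero]
        rw [Finset.sum_ite_eq (univ : Finset (Fin n)) d (fun d' => r (m, d') * B m m)]
        simp [mul_comm]
      · -- off-diagonal categories
        refine Finset.sum_congr rfl fun m' hm' => ?_
        have hmm : ¬ m = m' := by
          intro h; exact (Finset.mem_erase.mp hm').1 h.symm
        have h4 : ∀ d' : Fin n, AQ B Q (m, d) (m', d')
            = if Q.r d d' then B m m' / (clusterCard Q d : ℝ) else 0 := by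
          intro d'; simp [AQ, hmm]
        simp_rw [h4, mul_ite, mul_zero]
        rw [← Finset.sum_filter, ← Finset.sum_mul]
        simp only [hg]
        ring
    conv_lhs => rw [h0, h1, h2]
    ring
  -- the common within-cluster value
  set w : Fin L → ℝ := fun m =>
    ((∑ m' ∈ univ.erase m, B m m' * g c m') + epsR b0 B m * R) / (1 - B m m) with hw
  have hwmul : ∀ m, (1 - B m m) * w m
      = (∑ m' ∈ univ.erase m, B m m' * g c m') + epsR b0 B m * R := by
    intro m
    simp only [hw]
    rw [mul_comm, div_mul_cancel₀ _ (hgap m).ne']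
  have hgdc : ∀ {d d' : Fin n}, Q.r d d' → g d = g d' := by
    intro d d' h
    funext m'
    simp only [hg]
    have h1 : (univ.filter fun y => Q.r d y) = (univ.filter fun y => Q.r d' y) := hclassEq h
    have h2 : (clusterCard Q d : ℝ) = (clusterCard Q d' : ℝ) := by
      unfold clusterCard; rw [h1]
    rw [h1, h2]
  have hw_eq : ∀ (m : Fin L) (d : Fin n), Q.r c d → ¬ (((ℓ, c) : Firm L n) = (m, d)) →
      r (m, d) = w m := by
    intro m d hQ hne'
    have h1 := hstar m d
    rw [if_neg hne', ← hgdc hQ] at h1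
    simp only [hw]
    rw [eq_div_iff (hgap m).ne']
    linear_combination h1
  have hri : r (ℓ, c) = w ℓ + 1 / (1 - B ℓ ℓ) := by
    have h1 := hstar ℓ c
    rw [if_pos rfl] at h1
    simp only [hw]
    rw [← add_div, eq_div_iff (hgap ℓ).ne']
    linear_combination h1
  have hwr : w ℓ ≤ r (ℓ, c) := by
    have h2 : 0 < 1 / (1 - B ℓ ℓ) := one_div_pos.mpr (hgap ℓ)
    rw [hri]; linarith
  have hgc_ge : ∀ m', w m' ≤ g c m' := by
    intro m'
    have helem : ∀ d' ∈ univ.filter (fun y => Q.r c y), w m' ≤ r (m', d') := by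
      intro d' hd'
      have hQ : Q.r c d' := (mem_filter.mp hd').2
      by_cases hcase : (((ℓ, c) : Firm L n) = (m', d'))
      · obtain ⟨h1, h2⟩ : ℓ = m' ∧ c = d' := by simpa [Prod.ext_iff] using hcase
        rw [← hcase, ← h1]
        exact hwr
      · rw [hw_eq m' d' hQ hcase]
    simp only [hg]
    rw [le_div_iff₀ (hccpos c)]
    calc w m' * (clusterCard Q c : ℝ)
        = ∑ _d' ∈ univ.filter (fun y => Q.r c y), w m' := by
          rw [Finset.sum_const, nsmul_eq_mul, mul_comm]; rfl
      _ ≤ ∑ d' ∈ univ.filter (fun y => Q.r c y), r (m', d') := Finset.sum_le_sum helem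
  -- values outside the cluster of c are dominated by w
  have houter : ∀ (d0 : Fin n), ¬ Q.r c d0 → ∀ m, r (m, d0) ≤ w m := by
    intro d0 hd0
    have hnei : ∀ (m' : Fin L) (d' : Fin n), Q.r d0 d' → ¬ (((ℓ, c) : Firm L n) = (m', d')) := by
      intro m' d' hQ' h
      obtain ⟨h1, h2⟩ : ℓ = m' ∧ c = d' := by simpa [Prod.ext_iff] using h
      rw [← h2] at hQ'
      exact hd0 (Q.symm' hQ')
    have hconst : ∀ (m' : Fin L) (d' : Fin n), Q.r d0 d' → r (m', d') = r (m', d0) := by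
      intro m' d' hQ'
      have e1 := hstar m' d'
      have e2 := hstar m' d0
      rw [if_neg (hnei m' d' hQ'), ← hgdc hQ'] at e1
      rw [if_neg (hnei m' d0 (hrefl d0))] at e2
      have h9 : (1 - B m' m') * (r (m', d') - r (m', d0)) = 0 := by
        linear_combination e1 - e2
      have h10 := (mul_eq_zero.mp h9).resolve_left (hgap m').ne'
      linarith [h10]
    have hgd0 : ∀ m', g d0 m' = r (m', d0) := by
      intro m'
      simp only [hg]
      rw [Finset.sum_congr rfl fun d' hd' => hconst m' d' (mem_filter.mp hd').2]
      rw [Finset.sum_const, nsmul_eq_mul]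
      have hk : ((univ.filter fun y => Q.r d0 y).card : ℝ) = (clusterCard Q d0 : ℝ) := rfl
      rw [hk]
      exact mul_div_cancel_left₀ _ (hccpos d0).ne'
    set D : Matrix (Fin L) (Fin L) ℝ := Matrix.of fun m m' => B m m' with hD
    set ψ : Fin L → ℝ := fun m => w m - r (m, d0) with hψ
    have hsys : ∀ m, 0 ≤ ((1 - D) *ᵥ ψ) m := by
      intro m
      have hmv : ((1 - D) *ᵥ ψ) m = ψ m - ∑ m', B m m' * ψ m' := by
        simp only [Matrix.mulVec, dotProduct, Matrix.sub_apply, Matrix.one_apply,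
          sub_mul, Finset.sum_sub_distrib, ite_mul, one_mul, zero_mul, hD, Matrix.of_apply,
          Finset.sum_ite_eq (univ : Finset (Fin L)) m]
        simp
      rw [hmv]
      rw [← Finset.add_sum_erase (univ : Finset (Fin L)) (fun m' => B m m' * ψ m') (mem_univ m)]
      have e2 := hstar m d0
      rw [if_neg (hnei m d0 (hrefl d0))] at e2
      have key : (1 - B m m) * ψ m = ∑ m' ∈ univ.erase m, B m m' * (g c m' - g d0 m') := by
        have h11 : ∑ m' ∈ univ.erase m, B m m' * (g c m' - g d0 m')
            = (∑ m' ∈ univ.erase m, B m m' * g c m') - ∑ m' ∈ univ.erase m, B m m' * g d0 m' := by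
          rw [← Finset.sum_sub_distrib]
          exact Finset.sum_congr rfl fun m' _ => by ring
        rw [h11]
        have h12 : (1 - B m m) * ψ m = (1 - B m m) * w m - (1 - B m m) * r (m, d0) := by
          simp only [hψ]; ring
        rw [h12, hwmul m]
        linear_combination -e2
      have hterm : ∀ m' ∈ univ.erase m, B m m' * ψ m' ≤ B m m' * (g c m' - g d0 m') := by
        intro m' _
        refine mul_le_mul_of_nonneg_left ?_ (hB m m')
        rw [hgd0 m']
        simp only [hψ]
        have := hgc_ge m'
        linarith
      have hsum := Finset.sum_le_sum hterm
      have hkey2 : ∑ m' ∈ univ.erase m, B m m' * ψ m' ≤ (1 - B m m) * ψ m := by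
        rw [key]; exact hsum
      simp only [hψ] at hkey2 ⊢
      linarith
    have hneL : Nonempty (Fin L) := ⟨⟨0, hL⟩⟩
    have hDTcol : ∀ q, ∑ p, D.transpose p q ≤ 1 - γ := by
      intro q
      have : ∑ p, D.transpose p q = ∑ p, B q p := by
        exact Finset.sum_congr rfl fun p _ => rfl
      rw [this]
      exact hBrow q
    obtain ⟨hdetDT, hDTpos⟩ := aux_neumann D.transpose (1 - γ) hρ0 hρ1
      (fun p q => hB q p) hDTcol
    have hTT : (1 - D.transpose) = (1 - D).transpose := by
      rw [Matrix.transpose_sub, Matrix.transpose_one]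
    have hdetD : IsUnit (1 - D).det := by
      rw [hTT, Matrix.det_transpose] at hdetDT
      exact hdetDT
    have hDinv : ∀ m m', 0 ≤ (1 - D)⁻¹ m m' := by
      intro m m'
      have h1 : (1 - D.transpose)⁻¹ m' m = (1 - D)⁻¹ m m' := by
        rw [hTT, ← Matrix.transpose_nonsing_inv]
        rfl
      rw [← h1]
      exact hDTpos m' m
    have hψeq : ψ = (1 - D)⁻¹ *ᵥ ((1 - D) *ᵥ ψ) := by
      rw [Matrix.mulVec_mulVec, Matrix.nonsing_inv_mul _ hdetD, Matrix.one_mulVec]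
    intro m
    have hψm : 0 ≤ ψ m := by
      rw [congrFun hψeq m]
      rw [Matrix.mulVec, dotProduct]
      exact Finset.sum_nonneg fun m' _ => mul_nonneg (hDinv m m') (hsys m')
    simp only [hψ] at hψm
    linarith
  -- pointwise bound
  set μ : Fin L → ℝ := fun m => if m = ℓ then r (ℓ, c) else w m with hμ
  have hmaster : ∀ (m : Fin L) (d : Fin n), r (m, d) ≤ μ m := by
    intro m d
    have hwμ : w m ≤ μ m := by
      simp only [hμ]
      split_ifs with h
      · subst h; exact hwr
      · exact le_refl _
    by_cases hQ : Q.r c d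
    · by_cases hcase : (((ℓ, c) : Firm L n) = (m, d))
      · obtain ⟨h1, h2⟩ : ℓ = m ∧ c = d := by simpa [Prod.ext_iff] using hcase
        rw [← hcase]
        simp only [hμ, ← h1, if_pos rfl]
        exact le_refl _
      · rw [hw_eq m d hQ hcase]; exact hwμ
    · exact le_trans (houter d hQ m) hwμ
  -- the deviation vector and its value
  set u : Firm L n → ℝ := fun j => x j - ab (ℓ, c) j with hu
  set t : ℝ := ∑ j : Firm L n, r j * u j with ht
  have hxval : ∑ j : Firm L n, r j * x j ≤ ∑ m : Fin L, μ m * B ℓ m := by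
    rw [Fintype.sum_prod_type]
    refine Finset.sum_le_sum fun m _ => ?_
    calc ∑ d : Fin n, r (m, d) * x (m, d)
        ≤ ∑ d : Fin n, μ m * x (m, d) := by
          refine Finset.sum_le_sum fun d _ => ?_
          exact mul_le_mul_of_nonneg_right (hmaster m d) (hx.1 (m, d))
      _ = μ m * ∑ d : Fin n, x (m, d) := by rw [Finset.mul_sum]
      _ = μ m * B ℓ m := by rw [hx.2 m]
  have habval : ∑ j : Firm L n, r j * ab (ℓ, c) j = ∑ m : Fin L, μ m * B ℓ m := by
    rw [Fintype.sum_prod_type]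
    refine Finset.sum_congr rfl fun m _ => ?_
    by_cases hm : m = ℓ
    · subst hm
      have h5 : ∀ d : Fin n, ab (m, c) (m, d) = if c = d then B m m else 0 := by
        intro d; simp [hab, AQ, Prod.ext_iff]
      simp_rw [h5, mul_ite, mul_zero]
      rw [Finset.sum_ite_eq (univ : Finset (Fin n)) c (fun d => r (m, d) * B m m)]
      simp [hμ]
    · have h5 : ∀ d : Fin n, ab (ℓ, c) (m, d)
          = if Q.r c d then B ℓ m / (clusterCard Q c : ℝ) else 0 := by
        intro d
        have : ¬ (ℓ = m) := fun h => hm h.symm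
        simp [hab, AQ, this]
      simp_rw [h5, mul_ite, mul_zero]
      rw [← Finset.sum_filter]
      have h6 : ∀ d ∈ univ.filter (fun y => Q.r c y),
          r (m, d) * (B ℓ m / (clusterCard Q c : ℝ))
            = w m * (B ℓ m / (clusterCard Q c : ℝ)) := by
        intro d hd
        have hQ : Q.r c d := (mem_filter.mp hd).2
        have hne' : ¬ (((ℓ, c) : Firm L n) = (m, d)) := by
          intro h
          obtain ⟨h1, h2⟩ : ℓ = m ∧ c = d := by simpa [Prod.ext_iff] using h
          exact hm h1.symm
        rw [hw_eq m d hQ hne']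
      rw [Finset.sum_congr rfl h6, Finset.sum_const, nsmul_eq_mul]
      have hk : ((univ.filter fun y => Q.r c y).card : ℝ) = (clusterCard Q c : ℝ) := rfl
      rw [hk]
      have hμm : μ m = w m := by simp [hμ, hm]
      rw [hμm, ← mul_div_assoc, mul_comm (w m) (B ℓ m), ← mul_div_assoc]
      rw [mul_div_cancel_left₀ _ (hccpos c).ne']
  have ht0 : t ≤ 0 := by
    have h7 : t = (∑ j : Firm L n, r j * x j) - ∑ j : Firm L n, r j * ab (ℓ, c) j := by
      rw [ht, ← Finset.sum_sub_distrib]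
      exact Finset.sum_congr rfl fun j _ => by simp only [hu]; ring
    rw [h7, habval]
    linarith [hxval]
  -- Sherman–Morrison step
  set At' := AtMR a0 b0 B au with hAt'
  have hAtdiff : ∀ p q, At' p q = At p q + (if q = ((ℓ, c) : Firm L n) then u p else 0) := by
    intro p q
    by_cases hq : q = ((ℓ, c) : Firm L n)
    · subst hq
      simp only [hAt', hAt, AtMR, Matrix.of_apply, hau, Function.update_self, if_pos rfl,
        hu, ite_true]
      ring
    · simp only [hAt', hAt, AtMR, Matrix.of_apply, hau, Function.update_of_ne hq, if_neg hq,
        add_zero]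
  set v : Firm L n → ℝ := S.mulVec (a0n n a0) with hv
  have hvi : 0 ≤ v ((ℓ, c) : Firm L n) := by
    simp only [hv, Matrix.mulVec, dotProduct]
    refine Finset.sum_nonneg fun j _ => mul_nonneg (hr0 j) ?_
    exact div_nonneg (ha0 j.1).le hn0.le
  have h1t : (0:ℝ) < 1 - t := by linarith
  have hti : (S *ᵥ u) ((ℓ, c) : Firm L n) = t := by
    simp only [Matrix.mulVec, dotProduct, ht, hr]
  set y : Firm L n → ℝ := fun p => v p + (S *ᵥ u) p * (v ((ℓ, c) : Firm L n) / (1 - t)) with hy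
  have hyi : y ((ℓ, c) : Firm L n) = v ((ℓ, c) : Firm L n) / (1 - t) := by
    simp only [hy, hti]
    field_simp
    ring
  have hMy : ∀ p, ((1 - At') *ᵥ y) p = a0n n a0 p := by
    intro p
    have hinvv : (1 - At) *ᵥ v = a0n n a0 := by
      rw [hv, hS, Matrix.mulVec_mulVec, Matrix.mul_nonsing_inv _ hdet, Matrix.one_mulVec]
    have hinvu : (1 - At) *ᵥ (S *ᵥ u) = u := by
      rw [hS, Matrix.mulVec_mulVec, Matrix.mul_nonsing_inv _ hdet, Matrix.one_mulVec]
    have h1 : ((1 - At') *ᵥ y) p = ((1 - At) *ᵥ y) p - u p * y ((ℓ, c) : Firm L n) := by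
      simp only [Matrix.mulVec, dotProduct, Matrix.sub_apply, Matrix.one_apply]
      calc ∑ q, ((if p = q then (1:ℝ) else 0) - At' p q) * y q
          = ∑ q, (((if p = q then (1:ℝ) else 0) - At p q) * y q
              - (if q = ((ℓ, c) : Firm L n) then u p * y q else 0)) := by
            refine Finset.sum_congr rfl fun q _ => ?_
            rw [hAtdiff p q]
            by_cases hq : q = ((ℓ, c) : Firm L n) <;> simp [hq] <;> ring
        _ = (∑ q, ((if p = q then (1:ℝ) else 0) - At p q) * y q)
              - u p * y ((ℓ, c) : Firm L n) := by
            rw [Finset.sum_sub_distrib]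
            congr 1
            rw [Finset.sum_ite_eq' (univ : Finset (Firm L n)) ((ℓ, c) : Firm L n)
              (fun q => u p * y q)]
            simp
    have h2 : ((1 - At) *ᵥ y) p
        = a0n n a0 p + u p * (v ((ℓ, c) : Firm L n) / (1 - t)) := by
      have h3 : ((1 - At) *ᵥ y) p = ((1 - At) *ᵥ v) p
          + ((1 - At) *ᵥ (S *ᵥ u)) p * (v ((ℓ, c) : Firm L n) / (1 - t)) := by
        simp only [Matrix.mulVec, dotProduct, hy]
        rw [Finset.sum_mul, ← Finset.sum_add_distrib]
        refine Finset.sum_congr rfl fun q _ => ?_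
        ring
      rw [h3, hinvv, hinvu]
    rw [h1, h2, hyi]
    ring
  have hfinal : (1 - At')⁻¹ *ᵥ (a0n n a0) = y := by
    have hMy' : (1 - At') *ᵥ y = a0n n a0 := funext hMy
    rw [← hMy', Matrix.mulVec_mulVec, Matrix.nonsing_inv_mul _ hdet', Matrix.one_mulVec]
  have hpay_u : payoffR a0 b0 B ((ℓ, c) : Firm L n) au
      = epsR b0 B ℓ * (v ((ℓ, c) : Firm L n) / (1 - t)) := by
    show epsR b0 B ((ℓ, c) : Firm L n).1
        * ((1 - AtMR a0 b0 B au)⁻¹.mulVec (a0n n a0) ((ℓ, c) : Firm L n)) = _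
    rw [← hAt']
    rw [show (1 - At')⁻¹.mulVec (a0n n a0) ((ℓ, c) : Firm L n)
        = y ((ℓ, c) : Firm L n) from congrFun hfinal _]
    rw [hyi]
  have hpay_b : payoffR a0 b0 B ((ℓ, c) : Firm L n) ab
      = epsR b0 B ℓ * v ((ℓ, c) : Firm L n) := rfl
  rw [hpay_u, hpay_b]
  exact mul_le_mul_of_nonneg_left (div_le_self hvi (by linarith)) (hε ℓ).1

end
end

section
/- Let L ≥ 1 and m ≥ 1, let B = (b_{ℓ,ℓ'}) be an L×L matrix with nonnegative entries and every row sum strictly less than 1, and set C := (I − B)^{-1}. Let A be the (mL)×(mL) matrix indexed by pairs (ℓ,c) with ℓ ∈ {1,…,L}, c ∈ {1,…,m}, defined by A_{(ℓ,c),(ℓ,c)} = b_{ℓ,ℓ}, A_{(ℓ,c),(ℓ,c')} = 0 for c' ≠ c, and A_{(ℓ,c),(ℓ',c')} = b_{ℓ,ℓ'}/m for every ℓ' ≠ ℓ and every c'. Then I − A is invertible and its inverse has entries: ((I−A)^{-1})_{(ℓ,c),(ℓ,c)} = C_{ℓ,ℓ}/m + (m−1)/(m(1−b_{ℓ,ℓ}));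 ((I−A)^{-1})_{(ℓ,c),(ℓ,c')} = C_{ℓ,ℓ}/m − 1/(m(1−b_{ℓ,ℓ})) for c' ≠ c; and ((I−A)^{-1})_{(ℓ,c),(ℓ',c')} = C_{ℓ,ℓ'}/m for ℓ' ≠ ℓ. -/
/-!
STATEMENT 10: explicit inverse of I − A for a single cluster of m replicated
countries. B is an L×L nonnegative matrix with row sums < 1, C = (I − B)⁻¹,
and A is the (mL)×(mL) matrix indexed by pairs (ℓ,c) with
A_{(ℓ,c),(ℓ,c)} = b_{ℓ,ℓ}, A_{(ℓ,c),(ℓ,c')} = 0 for c' ≠ c, and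
A_{(ℓ,c),(ℓ',c')} = b_{ℓ,ℓ'}/m for ℓ' ≠ ℓ. Then I − A is invertible and
its inverse has the stated entries.
-/

noncomputable section

open Matrix

private lemma isUnit_one_sub_of_rows {L : ℕ} (B : Matrix (Fin L) (Fin L) ℝ)
    (hB : ∀ ℓ ℓ', 0 ≤ B ℓ ℓ') (hrow : ∀ ℓ, ∑ ℓ', B ℓ ℓ' < 1) :
    IsUnit (1 - B) := by
  rw [Matrix.isUnit_iff_isUnit_det, isUnit_iff_ne_zero]
  intro hdet
  obtain ⟨v, hv0, hv⟩ := Matrix.exists_mulVec_eq_zero_iff.mpr hdet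
  obtain ⟨j, hj⟩ := Function.ne_iff.mp hv0
  have : Nonempty (Fin L) := ⟨j⟩
  obtain ⟨i, hi⟩ := Finite.exists_max (fun k => |v k|)
  have hvi : 0 < |v i| := lt_of_lt_of_le (abs_pos.mpr hj) (hi j)
  have h2 : v i = ∑ ℓ', B i ℓ' * v ℓ' := by
    have h := congrFun hv i
    simp only [Matrix.mulVec, dotProduct, Matrix.sub_apply, Matrix.one_apply, sub_mul,
      Finset.sum_sub_distrib, ite_mul, one_mul, zero_mul, Finset.sum_ite_eq,
      Finset.mem_univ, if_true, Pi.zero_apply] at h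
    linarith
  have h3 : |v i| ≤ (∑ ℓ', B i ℓ') * |v i| := by
    calc |v i| = |∑ ℓ', B i ℓ' * v ℓ'| := by rw [← h2]
    _ ≤ ∑ ℓ', |B i ℓ' * v ℓ'| := Finset.abs_sum_le_sum_abs _ _
    _ ≤ ∑ ℓ', B i ℓ' * |v i| := by
        refine Finset.sum_le_sum fun k _ => ?_
        rw [abs_mul, abs_of_nonneg (hB i k)]
        exact mul_le_mul_of_nonneg_left (hi k) (hB i k)
    _ = (∑ ℓ', B i ℓ') * |v i| := by rw [Finset.sum_mul]
  nlinarith [hrow i]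

theorem cluster_inverse
    (L m : ℕ) (hL : 1 ≤ L) (hm : 1 ≤ m)
    (B : Matrix (Fin L) (Fin L) ℝ)
    (hB : ∀ ℓ ℓ', 0 ≤ B ℓ ℓ') (hrow : ∀ ℓ, ∑ ℓ', B ℓ ℓ' < 1)
    (A : Matrix (Fin L × Fin m) (Fin L × Fin m) ℝ)
    (hA : ∀ p q : Fin L × Fin m, A p q =
      if p.1 = q.1 then (if p = q then B p.1 p.1 else 0)
      else B p.1 q.1 / (m : ℝ)) :
    IsUnit (1 - A) ∧
    ∀ p q : Fin L × Fin m,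
      (1 - A)⁻¹ p q =
        if p.1 = q.1 then
          (if p = q then
            (1 - B)⁻¹ p.1 p.1 / (m : ℝ) + ((m : ℝ) - 1) / ((m : ℝ) * (1 - B p.1 p.1))
          else
            (1 - B)⁻¹ p.1 p.1 / (m : ℝ) - 1 / ((m : ℝ) * (1 - B p.1 p.1)))
        else (1 - B)⁻¹ p.1 q.1 / (m : ℝ) := by
  have hU : IsUnit (1 - B) := isUnit_one_sub_of_rows B hB hrow
  set C := (1 - B)⁻¹ with hCdef
  have hCB : (1 - B) * C = 1 :=
    Matrix.mul_nonsing_inv _ ((Matrix.isUnit_iff_isUnit_det _).mp hU)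
  have hm0 : (m : ℝ) ≠ 0 := by
    have : (0 : ℝ) < m := by exact_mod_cast hm
    linarith
  have hD : ∀ ℓ, B ℓ ℓ < 1 := fun ℓ =>
    lt_of_le_of_lt (Finset.single_le_sum (fun k _ => hB ℓ k) (Finset.mem_univ ℓ)) (hrow ℓ)
  have hDne : ∀ ℓ, (1 - B ℓ ℓ) ≠ 0 := fun ℓ => by have := hD ℓ; intro h; linarith
  set M : Matrix (Fin L × Fin m) (Fin L × Fin m) ℝ := fun p q =>
    if p.1 = q.1 then
      (if p = q then C p.1 p.1 / (m : ℝ) + ((m : ℝ) - 1) / ((m : ℝ) * (1 - B p.1 p.1))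
       else C p.1 p.1 / (m : ℝ) - 1 / ((m : ℝ) * (1 - B p.1 p.1)))
    else C p.1 q.1 / (m : ℝ) with hM
  -- column sums of M within a block
  have hsumM : ∀ (ℓ' ℓ₀ : Fin L) (c₀ : Fin m),
      ∑ c' : Fin m, M (ℓ', c') (ℓ₀, c₀) = C ℓ' ℓ₀ := by
    intro ℓ' ℓ₀ c₀
    by_cases h : ℓ' = ℓ₀
    · subst h
      have : ∀ c' : Fin m, M (ℓ', c') (ℓ', c₀) =
          (C ℓ' ℓ' / (m : ℝ) - 1 / ((m : ℝ) * (1 - B ℓ' ℓ'))) +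
          (if c' = c₀ then (m : ℝ) / ((m : ℝ) * (1 - B ℓ' ℓ')) else 0) := by
        intro c'
        by_cases hc : c' = c₀
        · subst hc
          have e1 : M (ℓ', c') (ℓ', c') =
              C ℓ' ℓ' / (m : ℝ) + ((m : ℝ) - 1) / ((m : ℝ) * (1 - B ℓ' ℓ')) := by
            simp [hM]
          rw [e1, if_pos rfl]
          field_simp
          ring
        · have e1 : M (ℓ', c') (ℓ', c₀) =
              C ℓ' ℓ' / (m : ℝ) - 1 / ((m : ℝ) * (1 - B ℓ' ℓ')) := by
            simp [hM, hc]
          rw [e1, if_neg hc, add_zero]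
      rw [Finset.sum_congr rfl fun c' _ => this c']
      rw [Finset.sum_add_distrib, Finset.sum_const, Finset.sum_ite_eq' Finset.univ c₀,
        if_pos (Finset.mem_univ c₀), Finset.card_univ, Fintype.card_fin, nsmul_eq_mul]
      field_simp
      ring
    · have : ∀ c' : Fin m, M (ℓ', c') (ℓ₀, c₀) = C ℓ' ℓ₀ / (m : ℝ) := by
        intro c'; simp only [hM, if_neg h]
      rw [Finset.sum_congr rfl fun c' _ => this c', Finset.sum_const, Finset.card_univ,
        Fintype.card_fin, nsmul_eq_mul]
      field_simp
  have key : (1 - A) * M = 1 := by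
    ext ⟨ℓ, c⟩ ⟨ℓ₀, c₀⟩
    rw [Matrix.mul_apply, Fintype.sum_prod_type]
    have hrowE : ∀ (ℓ' : Fin L) (c' : Fin m), (1 - A) (ℓ, c) (ℓ', c') =
        if ℓ' = ℓ then (if c' = c then 1 - B ℓ ℓ else 0) else -(B ℓ ℓ' / (m : ℝ)) := by
      intro ℓ' c'
      rw [Matrix.sub_apply, Matrix.one_apply, hA]
      by_cases h1 : ℓ' = ℓ
      · subst h1
        by_cases h2 : c' = c
        · subst h2; simp
        · have : ¬ ((ℓ', c) = (ℓ', c')) := by simp [Ne.symm h2]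
          simp [this, Ne.symm h2, h2, Prod.ext_iff]
      · have : ¬ ((ℓ, c) = (ℓ', c')) := by simp [Prod.ext_iff, Ne.symm h1]
        simp [this, Ne.symm h1, h1]
    have step : ∀ ℓ' : Fin L, ∑ c' : Fin m, (1 - A) (ℓ, c) (ℓ', c') * M (ℓ', c') (ℓ₀, c₀) =
        if ℓ' = ℓ then (1 - B ℓ ℓ) * M (ℓ, c) (ℓ₀, c₀) else -(B ℓ ℓ' / (m : ℝ)) * C ℓ' ℓ₀ := by
      intro ℓ'
      by_cases h1 : ℓ' = ℓ
      · subst h1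
        rw [if_pos rfl]
        have : ∀ c' : Fin m, (1 - A) (ℓ', c) (ℓ', c') * M (ℓ', c') (ℓ₀, c₀) =
            if c' = c then (1 - B ℓ' ℓ') * M (ℓ', c) (ℓ₀, c₀) else 0 := by
          intro c'
          rw [hrowE, if_pos rfl]
          by_cases h2 : c' = c
          · subst h2; simp
          · simp [h2]
        rw [Finset.sum_congr rfl fun c' _ => this c',
          Finset.sum_ite_eq' Finset.univ c, if_pos (Finset.mem_univ c)]
      · rw [if_neg h1]
        have : ∀ c' : Fin m, (1 - A) (ℓ, c) (ℓ', c') * M (ℓ', c') (ℓ₀, c₀) =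
            -(B ℓ ℓ' / (m : ℝ)) * M (ℓ', c') (ℓ₀, c₀) := by
          intro c'; rw [hrowE, if_neg h1]
        rw [Finset.sum_congr rfl fun c' _ => this c', ← Finset.mul_sum, hsumM]
    rw [Finset.sum_congr rfl fun ℓ' _ => step ℓ']
    rw [← Finset.add_sum_erase Finset.univ _ (Finset.mem_univ ℓ), if_pos rfl]
    have herase : ∑ ℓ' ∈ Finset.univ.erase ℓ,
        (if ℓ' = ℓ then (1 - B ℓ ℓ) * M (ℓ, c) (ℓ₀, c₀) else -(B ℓ ℓ' / (m : ℝ)) * C ℓ' ℓ₀)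
        = ∑ ℓ' ∈ Finset.univ.erase ℓ, -(B ℓ ℓ' / (m : ℝ)) * C ℓ' ℓ₀ := by
      refine Finset.sum_congr rfl fun ℓ' hℓ' => ?_
      rw [if_neg (Finset.mem_erase.mp hℓ').1]
    rw [herase]
    have hsplit : ∑ ℓ' ∈ Finset.univ.erase ℓ, -(B ℓ ℓ' / (m : ℝ)) * C ℓ' ℓ₀
        = (∑ ℓ' : Fin L, -(B ℓ ℓ' / (m : ℝ)) * C ℓ' ℓ₀) - (-(B ℓ ℓ / (m : ℝ)) * C ℓ ℓ₀) :=
      Finset.sum_erase_eq_sub (Finset.mem_univ ℓ)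
    rw [hsplit]
    have hCBe : C ℓ ℓ₀ - ∑ ℓ' : Fin L, B ℓ ℓ' * C ℓ' ℓ₀ = if ℓ = ℓ₀ then 1 else 0 := by
      have := congrFun (congrFun hCB ℓ) ℓ₀
      rw [Matrix.mul_apply] at this
      have h1 : ∀ ℓ' : Fin L, (1 - B) ℓ ℓ' * C ℓ' ℓ₀ =
          (if ℓ' = ℓ then C ℓ' ℓ₀ else 0) - B ℓ ℓ' * C ℓ' ℓ₀ := by
        intro ℓ'
        rw [Matrix.sub_apply, Matrix.one_apply, sub_mul]
        by_cases h : ℓ = ℓ'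
        · subst h; simp
        · simp [h, Ne.symm h]
      rw [Finset.sum_congr rfl fun ℓ' _ => h1 ℓ', Finset.sum_sub_distrib,
        Finset.sum_ite_eq' Finset.univ ℓ, if_pos (Finset.mem_univ ℓ),
        Matrix.one_apply] at this
      exact this
    have hsum2 : ∑ ℓ' : Fin L, -(B ℓ ℓ' / (m : ℝ)) * C ℓ' ℓ₀
        = -(1 / (m : ℝ)) * ∑ ℓ' : Fin L, B ℓ ℓ' * C ℓ' ℓ₀ := by
      rw [Finset.mul_sum]
      exact Finset.sum_congr rfl fun ℓ' _ => by ring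
    rw [hsum2]
    set S := ∑ ℓ' : Fin L, B ℓ ℓ' * C ℓ' ℓ₀ with hS
    rw [Matrix.one_apply]
    by_cases h1 : ℓ = ℓ₀
    · subst h1
      have hCS : S = C ℓ ℓ - 1 := by
        have h := hCBe; rw [if_pos rfl] at h; linarith
      by_cases h2 : c = c₀
      · subst h2
        have e1 : M (ℓ, c) (ℓ, c) =
            C ℓ ℓ / (m : ℝ) + ((m : ℝ) - 1) / ((m : ℝ) * (1 - B ℓ ℓ)) := by simp [hM]
        rw [e1, if_pos rfl, hCS]
        field_simp [hDne ℓ]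
        ring
      · have e1 : M (ℓ, c) (ℓ, c₀) =
            C ℓ ℓ / (m : ℝ) - 1 / ((m : ℝ) * (1 - B ℓ ℓ)) := by simp [hM, h2]
        rw [e1, if_neg (by simp [Prod.ext_iff, h2] :
          ¬ (((ℓ, c) : Fin L × Fin m) = (ℓ, c₀))), hCS]
        field_simp [hDne ℓ]
        ring
    · have hCS : S = C ℓ ℓ₀ := by
        have h := hCBe; rw [if_neg h1] at h; linarith
      have e1 : M (ℓ, c) (ℓ₀, c₀) = C ℓ ℓ₀ / (m : ℝ) := by simp [hM, h1]
      rw [e1, if_neg (by simp [Prod.ext_iff, h1] :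
        ¬ (((ℓ, c) : Fin L × Fin m) = (ℓ₀, c₀))), hCS]
      field_simp
      ring
  have hUnit : IsUnit (1 - A) := (Matrix.isUnit_iff_isUnit_det _).mpr (Matrix.isUnit_det_of_right_inverse key)
  refine ⟨hUnit, fun p q => ?_⟩
  rw [Matrix.inv_eq_right_inv key]

end
end

section
/- Assume every firm has Hicks-neutral productivity, so that the entropy-corrected productivity vector is u ∈ ℝ^{nL} with u_i = b_{ℓ(i),0} log b_{ℓ(i),0} for every firm i. Then the social welfare W(A^𝒬) := a_0^n ⋅ ( (I − A^𝒬)^{-1} u ) is the same for all 𝒬-clustered networks: for any two partitions 𝒬 and 𝒬' of {1,…,n}, a_0^n ⋅ ( (I − A^𝒬)^{-1} u ) = a_0^n ⋅ ( (I − A^{𝒬'})^{-1} u ). -/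
/-!
Replicate economy with n countries and L categories; firms are pairs
(category, country) in `Fin L × Fin n`; a partition 𝒬 of the countries is a
`Setoid (Fin n)` and `AQ B Q` is the 𝒬-clustered network A^𝒬.

STATEMENT 11: under Hicks-neutral productivity the entropy-corrected
productivity vector is u_i = b_{ℓ(i),0} log b_{ℓ(i),0}, and the social
welfare W(A^𝒬) = a_0^n ⋅ ((I − A^𝒬)⁻¹ u) is the same for all partitions 𝒬.
-/

noncomputable section

open Matrix Finset

attribute [local instance] Classical.propDecidable

lemma clusterCard_pos {n : ℕ} (Q : Setoid (Fin n)) (c : Fin n) : 0 < clusterCard Q c := by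
  refine Finset.card_pos.2 ⟨c, ?_⟩
  simp [clusterCard, Setoid.refl']

lemma AQ_nonneg {L n : ℕ} (B : Fin L → Fin L → ℝ) (hB : ∀ ℓ ℓ', 0 ≤ B ℓ ℓ')
    (Q : Setoid (Fin n)) (i j : Firm L n) : 0 ≤ AQ B Q i j := by
  unfold AQ
  dsimp only [Matrix.of_apply]
  split_ifs with h1 h2 h3
  · exact hB _ _
  · exact le_refl _
  · exact div_nonneg (hB _ _) (Nat.cast_nonneg _)
  · exact le_refl _

lemma AQ_inner_sum {L n : ℕ} (B : Fin L → Fin L → ℝ) (Q : Setoid (Fin n))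
    (i : Firm L n) (ℓ' : Fin L) : ∑ c', AQ B Q i (ℓ', c') = B i.1 ℓ' := by
  unfold AQ
  dsimp only [Matrix.of_apply]
  by_cases h : i.1 = ℓ'
  · subst h
    simp only [if_pos rfl]
    have he : ∀ c' : Fin n, (i = (i.1, c')) ↔ c' = i.2 := by
      intro c'; constructor
      · intro h; exact (congrArg Prod.snd h).symm
      · intro h; subst h; rfl
    simp only [he, if_true]
    rw [Finset.sum_ite_eq' univ i.2 (fun _ => B i.1 i.1)]
    simp
  · simp only [if_neg h]
    rw [← Finset.sum_filter, Finset.sum_const]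
    have hcard : (univ.filter fun c' => Q.r i.2 c').card = clusterCard Q i.2 := rfl
    rw [hcard, nsmul_eq_mul]
    have : (clusterCard Q i.2 : ℝ) ≠ 0 := by
      exact_mod_cast (clusterCard_pos Q i.2).ne'
    field_simp

lemma AQ_mulVec_cat {L n : ℕ} (B : Fin L → Fin L → ℝ) (Q : Setoid (Fin n))
    (w : Fin L → ℝ) (i : Firm L n) :
    (AQ B Q).mulVec (fun j => w j.1) i = ∑ ℓ', B i.1 ℓ' * w ℓ' := by
  unfold Matrix.mulVec dotProduct
  rw [Fintype.sum_prod_type]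
  refine Finset.sum_congr rfl fun ℓ' _ => ?_
  simp only
  rw [← Finset.sum_mul, AQ_inner_sum]

section Main
variable {L n : ℕ}

lemma det_one_sub_AQ_ne (B : Fin L → Fin L → ℝ) (hB : ∀ ℓ ℓ', 0 ≤ B ℓ ℓ')
    (hsum : ∀ ℓ, ∑ ℓ', B ℓ ℓ' < 1) (Q : Setoid (Fin n)) :
    (1 - AQ B Q).det ≠ 0 := by
  apply det_ne_zero_of_sum_row_lt_diag
  intro k
  have hdiagB : B k.1 k.1 ≤ ∑ ℓ', B k.1 ℓ' :=
    Finset.single_le_sum (fun ℓ' _ => hB k.1 ℓ') (Finset.mem_univ k.1)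
  have hAkk : AQ B Q k k = B k.1 k.1 := by simp [AQ]
  have hdiag : (1 - AQ B Q) k k = 1 - B k.1 k.1 := by
    rw [Matrix.sub_apply, Matrix.one_apply_eq, hAkk]
  have hoff : ∀ j ∈ Finset.univ.erase k, ‖(1 - AQ B Q) k j‖ = AQ B Q k j := by
    intro j hj
    have hne : k ≠ j := (Finset.mem_erase.1 hj).1.symm
    rw [Matrix.sub_apply, Matrix.one_apply_ne hne, zero_sub, norm_neg,
      Real.norm_eq_abs, abs_of_nonneg (AQ_nonneg B hB Q k j)]
  rw [Finset.sum_congr rfl hoff, Finset.sum_erase_eq_sub (Finset.mem_univ k), hAkk]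
  have hrowsum : ∑ j, AQ B Q k j = ∑ ℓ', B k.1 ℓ' := by
    rw [Fintype.sum_prod_type]
    exact Finset.sum_congr rfl fun ℓ' _ => AQ_inner_sum B Q k ℓ'
  rw [hrowsum, hdiag, Real.norm_eq_abs,
    abs_of_nonneg (by linarith [hsum k.1])]
  linarith [hsum k.1]

lemma det_one_sub_B_ne (B : Fin L → Fin L → ℝ) (hB : ∀ ℓ ℓ', 0 ≤ B ℓ ℓ')
    (hsum : ∀ ℓ, ∑ ℓ', B ℓ ℓ' < 1) :
    (1 - Matrix.of B).det ≠ 0 := by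
  apply det_ne_zero_of_sum_row_lt_diag
  intro k
  have hdiagB : B k k ≤ ∑ ℓ', B k ℓ' :=
    Finset.single_le_sum (fun ℓ' _ => hB k ℓ') (Finset.mem_univ k)
  have hoff : ∀ j ∈ Finset.univ.erase k, ‖(1 - Matrix.of B) k j‖ = B k j := by
    intro j hj
    have hne : k ≠ j := (Finset.mem_erase.1 hj).1.symm
    rw [Matrix.sub_apply, Matrix.one_apply_ne hne, Matrix.of_apply, zero_sub, norm_neg,
      Real.norm_eq_abs, abs_of_nonneg (hB k j)]
  rw [Finset.sum_congr rfl hoff, Finset.sum_erase_eq_sub (Finset.mem_univ k)]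
  have hdiag : (1 - Matrix.of B) k k = 1 - B k k := by
    rw [Matrix.sub_apply, Matrix.one_apply_eq, Matrix.of_apply]
  rw [hdiag, Real.norm_eq_abs, abs_of_nonneg (by linarith [hsum k])]
  linarith [hsum k]


theorem hicks_neutral_welfare_invariance
    (n L : ℕ) (hn : 1 ≤ n) (hL : 1 ≤ L)
    (a0 b0 : Fin L → ℝ) (B : Fin L → Fin L → ℝ)
    (ha0 : ∀ ℓ, 0 < a0 ℓ) (ha0sum : ∑ ℓ, a0 ℓ = 1)
    (hb0 : ∀ ℓ, 0 < b0 ℓ) (hB : ∀ ℓ ℓ', 0 ≤ B ℓ ℓ')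
    (hrow : ∀ ℓ, b0 ℓ + ∑ ℓ', B ℓ ℓ' ≤ 1)
    (u : Firm L n → ℝ) (hu : ∀ i, u i = b0 i.1 * Real.log (b0 i.1))
    (Q Q' : Setoid (Fin n)) :
    a0n n a0 ⬝ᵥ ((1 - AQ B Q)⁻¹.mulVec u)
      = a0n n a0 ⬝ᵥ ((1 - AQ B Q')⁻¹.mulVec u) := by
  have hsum : ∀ ℓ, ∑ ℓ', B ℓ ℓ' < 1 := fun ℓ => by linarith [hrow ℓ, hb0 ℓ]
  set v : Fin L → ℝ := fun ℓ => b0 ℓ * Real.log (b0 ℓ) with hv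
  have hBu : IsUnit (1 - Matrix.of B).det :=
    isUnit_iff_ne_zero.2 (det_one_sub_B_ne B hB hsum)
  set w : Fin L → ℝ := (1 - Matrix.of B)⁻¹.mulVec v with hw
  have hwv : (1 - Matrix.of B).mulVec w = v := by
    rw [hw, Matrix.mulVec_mulVec, Matrix.mul_nonsing_inv _ hBu, Matrix.one_mulVec]
  have key : ∀ Q'' : Setoid (Fin n),
      (1 - AQ B Q'')⁻¹.mulVec u = fun i : Firm L n => w i.1 := by
    intro Q''
    have hAu : IsUnit (1 - AQ B Q'').det :=
      isUnit_iff_ne_zero.2 (det_one_sub_AQ_ne B hB hsum Q'')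
    have hx : (1 - AQ B Q'').mulVec (fun i : Firm L n => w i.1) = u := by
      funext i
      rw [Matrix.sub_mulVec, Matrix.one_mulVec, Pi.sub_apply, AQ_mulVec_cat, hu i]
      have : ((1 - Matrix.of B).mulVec w) i.1 = v i.1 := by rw [hwv]
      rw [Matrix.sub_mulVec, Matrix.one_mulVec, Pi.sub_apply] at this
      have hBm : (Matrix.of B).mulVec w i.1 = ∑ ℓ', B i.1 ℓ' * w ℓ' := rfl
      rw [hBm] at this
      rw [this]
    rw [← hx, Matrix.mulVec_mulVec, Matrix.nonsing_inv_mul _ hAu, Matrix.one_mulVec]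
  rw [key Q, key Q']


end Main

end
end

section
/- For any integers n, m ≥ 1 and any real numbers a_1,…,a_n, b_1,…,b_m: (m/n) · Σ_{1 ≤ i < j ≤ n} |a_i − a_j| + (n/m) · Σ_{1 ≤ i < j ≤ m} |b_i − b_j| ≤ Σ_{i=1}^{n} Σ_{j=1}^{m} |a_i − b_j|. -/
/-!
STATEMENT 15: for n, m ≥ 1 and reals a_1,…,a_n, b_1,…,b_m,
(m/n) Σ_{i<j} |a_i − a_j| + (n/m) Σ_{i<j} |b_i − b_j|
  ≤ Σ_{i=1}^n Σ_{j=1}^m |a_i − b_j|.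
-/

open Finset
open MeasureTheory


noncomputable def gg (x t : ℝ) : ℝ := if x ≤ t then 1 else 0

lemma gg_eq (x y : ℝ) : (fun t => |gg x t - gg y t|)
    = Set.indicator (Set.Ico (min x y) (max x y)) (fun _ => (1:ℝ)) := by
  funext t
  rcases le_or_gt x t with hx | hx <;> rcases le_or_gt y t with hy | hy
  · simp [gg, Set.indicator_apply, Set.mem_Ico, hx, hy, hx.not_gt, hy.not_gt, min_le_iff, lt_max_iff]
  · simp [gg, Set.indicator_apply, Set.mem_Ico, hx, hy, hy.not_ge, min_le_iff, lt_max_iff]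
  · simp [gg, Set.indicator_apply, Set.mem_Ico, hy, hx, hx.not_ge, min_le_iff, lt_max_iff, abs_sub_comm]
  · simp [gg, Set.indicator_apply, Set.mem_Ico, hx, hy, hx.not_ge, hy.not_ge, min_le_iff]

lemma gg_integrable (x y : ℝ) : Integrable (fun t => |gg x t - gg y t|) := by
  rw [gg_eq]
  rw [integrable_indicator_iff measurableSet_Ico]
  exact integrableOn_const (by simp [Real.volume_Ico])

lemma gg_integral (x y : ℝ) : (∫ t, |gg x t - gg y t|) = |x - y| := by
  rw [gg_eq, integral_indicator measurableSet_Ico]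
  simp [Real.volume_Ico, ENNReal.toReal_ofReal (sub_nonneg.2 min_le_max), max_sub_min_eq_abs,
    abs_sub_comm]


lemma half_sum {k : ℕ} (f : Fin k → ℝ) :
    (∑ p ∈ (Finset.univ : Finset (Fin k × Fin k)).filter (fun p => p.1 < p.2),
      |f p.1 - f p.2|)
    = (1/2) * ∑ i, ∑ j, |f i - f j| := by
  have hswap : (∑ p ∈ (Finset.univ : Finset (Fin k × Fin k)).filter (fun p => p.2 < p.1),
      |f p.1 - f p.2|)
      = ∑ p ∈ (Finset.univ : Finset (Fin k × Fin k)).filter (fun p => p.1 < p.2),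
      |f p.1 - f p.2| := by
    apply Finset.sum_nbij' (fun p => p.swap) (fun p => p.swap) <;>
      simp [abs_sub_comm]
  have hfull : (∑ i, ∑ j, |f i - f j|)
      = ∑ p ∈ (Finset.univ : Finset (Fin k × Fin k)), |f p.1 - f p.2| := by
    rw [← Finset.sum_product', Finset.univ_product_univ]
  rw [hfull, ← Finset.sum_filter_add_sum_filter_not Finset.univ (fun p => p.1 < p.2)]
  have hnot : (∑ p ∈ (Finset.univ : Finset (Fin k × Fin k)).filter (fun p => ¬ p.1 < p.2),
      |f p.1 - f p.2|)
      = ∑ p ∈ (Finset.univ : Finset (Fin k × Fin k)).filter (fun p => p.2 < p.1),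
      |f p.1 - f p.2| := by
    rw [← Finset.sum_filter_add_sum_filter_not
      ((Finset.univ : Finset (Fin k × Fin k)).filter (fun p => ¬ p.1 < p.2))
      (fun p => p.1 = p.2), Finset.filter_filter, Finset.filter_filter]
    have h1 : (∑ p ∈ (Finset.univ : Finset (Fin k × Fin k)).filter
        (fun p => ¬ p.1 < p.2 ∧ p.1 = p.2), |f p.1 - f p.2|) = 0 := by
      apply Finset.sum_eq_zero
      intro p hp
      simp only [Finset.mem_filter] at hp
      rw [hp.2.2]; simp
    have h2 : (Finset.univ : Finset (Fin k × Fin k)).filter (fun p => ¬ p.1 < p.2 ∧ ¬ p.1 = p.2)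
        = (Finset.univ : Finset (Fin k × Fin k)).filter (fun p => p.2 < p.1) := by
      apply Finset.filter_congr
      intro p _
      constructor
      · rintro ⟨h, h'⟩; exact lt_of_le_of_ne (not_lt.1 h) (fun e => h' e.symm)
      · intro h; exact ⟨not_lt.2 h.le, fun e => absurd e.le (not_le.2 h)⟩
    rw [h1, h2, zero_add]
  rw [hnot, hswap]
  ring

lemma sum_abs01 {k l : ℕ} (c : Fin k → ℝ) (d : Fin l → ℝ)
    (hc : ∀ i, c i = 0 ∨ c i = 1) (hd : ∀ j, d j = 0 ∨ d j = 1) :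
    (∑ i, ∑ j, |c i - d j|)
      = (l : ℝ) * (∑ i, c i) + (k : ℝ) * (∑ j, d j)
        - 2 * (∑ i, c i) * (∑ j, d j) := by
  have h : ∀ i j, |c i - d j| = c i + d j - 2 * (c i * d j) := by
    intro i j
    rcases hc i with h1 | h1 <;> rcases hd j with h2 | h2 <;> rw [h1, h2] <;> norm_num
  calc (∑ i, ∑ j, |c i - d j|)
      = ∑ i, ((l : ℝ) * c i + (∑ j, d j) - 2 * (c i * ∑ j, d j)) := by
        refine Finset.sum_congr rfl fun i _ => ?_
        simp_rw [h]
        rw [Finset.sum_sub_distrib, Finset.sum_add_distrib, Finset.sum_const, Finset.card_univ,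
          Fintype.card_fin, nsmul_eq_mul, ← Finset.mul_sum, ← Finset.mul_sum]
    _ = _ := by
        rw [Finset.sum_sub_distrib, Finset.sum_add_distrib, ← Finset.mul_sum,
          Finset.sum_const, Finset.card_univ, Fintype.card_fin, nsmul_eq_mul,
          ← Finset.mul_sum, ← Finset.sum_mul]
        ring

lemma key_ineq (N M P Q : ℝ) (hN : 0 < N) (hM : 0 < M) :
    (M / N) * (1/2 * (N * P + N * P - 2 * P * P))
      + (N / M) * (1/2 * (M * Q + M * Q - 2 * Q * Q))
      ≤ M * P + N * Q - 2 * P * Q := by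
  rw [div_mul_eq_mul_div M N, div_mul_eq_mul_div N M,
    div_add_div _ _ hN.ne' hM.ne', div_le_iff₀ (mul_pos hN hM)]
  nlinarith [sq_nonneg (M * P - N * Q)]

theorem sum_pairwise_distances_inequality
    (n m : ℕ) (hn : 1 ≤ n) (hm : 1 ≤ m)
    (a : Fin n → ℝ) (b : Fin m → ℝ) :
    ((m : ℝ) / n) *
        (∑ p ∈ (Finset.univ : Finset (Fin n × Fin n)).filter (fun p => p.1 < p.2),
          |a p.1 - a p.2|)
      + ((n : ℝ) / m) *
        (∑ p ∈ (Finset.univ : Finset (Fin m × Fin m)).filter (fun p => p.1 < p.2),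
          |b p.1 - b p.2|)
      ≤ ∑ i : Fin n, ∑ j : Fin m, |a i - b j| := by
  have hn' : (0 : ℝ) < n := by exact_mod_cast hn
  have hm' : (0 : ℝ) < m := by exact_mod_cast hm
  rw [half_sum a, half_sum b]
  -- replace each double sum by an integral
  have intA : Integrable (fun t => ∑ i : Fin n, ∑ j : Fin n, |gg (a i) t - gg (a j) t|) :=
    integrable_finset_sum _ fun i _ => integrable_finset_sum _ fun j _ => gg_integrable _ _
  have intB : Integrable (fun t => ∑ i : Fin m, ∑ j : Fin m, |gg (b i) t - gg (b j) t|) :=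
    integrable_finset_sum _ fun i _ => integrable_finset_sum _ fun j _ => gg_integrable _ _
  have intC : Integrable (fun t => ∑ i : Fin n, ∑ j : Fin m, |gg (a i) t - gg (b j) t|) :=
    integrable_finset_sum _ fun i _ => integrable_finset_sum _ fun j _ => gg_integrable _ _
  have hA : (∑ i : Fin n, ∑ j : Fin n, |a i - a j|)
      = ∫ t, ∑ i : Fin n, ∑ j : Fin n, |gg (a i) t - gg (a j) t| := by
    rw [integral_finset_sum _ (fun i _ => integrable_finset_sum _ fun j _ => gg_integrable _ _)]
    refine Finset.sum_congr rfl fun i _ => ?_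
    rw [integral_finset_sum _ (fun j _ => gg_integrable _ _)]
    exact Finset.sum_congr rfl fun j _ => (gg_integral _ _).symm
  have hB : (∑ i : Fin m, ∑ j : Fin m, |b i - b j|)
      = ∫ t, ∑ i : Fin m, ∑ j : Fin m, |gg (b i) t - gg (b j) t| := by
    rw [integral_finset_sum _ (fun i _ => integrable_finset_sum _ fun j _ => gg_integrable _ _)]
    refine Finset.sum_congr rfl fun i _ => ?_
    rw [integral_finset_sum _ (fun j _ => gg_integrable _ _)]
    exact Finset.sum_congr rfl fun j _ => (gg_integral _ _).symm
  have hC : (∑ i : Fin n, ∑ j : Fin m, |a i - b j|)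
      = ∫ t, ∑ i : Fin n, ∑ j : Fin m, |gg (a i) t - gg (b j) t| := by
    rw [integral_finset_sum _ (fun i _ => integrable_finset_sum _ fun j _ => gg_integrable _ _)]
    refine Finset.sum_congr rfl fun i _ => ?_
    rw [integral_finset_sum _ (fun j _ => gg_integrable _ _)]
    exact Finset.sum_congr rfl fun j _ => (gg_integral _ _).symm
  rw [hA, hB, hC, ← integral_const_mul, ← integral_const_mul, ← integral_const_mul,
    ← integral_const_mul,
    ← integral_add ((intA.const_mul _).const_mul _) ((intB.const_mul _).const_mul _)]
  refine integral_mono (((intA.const_mul _).const_mul _).add ((intB.const_mul _).const_mul _))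
    intC fun t => ?_
  simp only
  have hc : ∀ i : Fin n, gg (a i) t = 0 ∨ gg (a i) t = 1 := by
    intro i; unfold gg; split <;> simp
  have hd : ∀ j : Fin m, gg (b j) t = 0 ∨ gg (b j) t = 1 := by
    intro j; unfold gg; split <;> simp
  rw [sum_abs01 _ _ hc hc, sum_abs01 _ _ hd hd, sum_abs01 _ _ hc hd]
  have := key_ineq (n : ℝ) (m : ℝ) (∑ i, gg (a i) t) (∑ j, gg (b j) t) hn' hm'
  calc ((m : ℝ) / n) * (1/2 * ((n : ℝ) * (∑ i, gg (a i) t) + (n : ℝ) * (∑ i, gg (a i) t)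
          - 2 * (∑ i, gg (a i) t) * (∑ i, gg (a i) t)))
        + ((n : ℝ) / m) * (1/2 * ((m : ℝ) * (∑ j, gg (b j) t) + (m : ℝ) * (∑ j, gg (b j) t)
          - 2 * (∑ j, gg (b j) t) * (∑ j, gg (b j) t)))
      ≤ (m : ℝ) * (∑ i, gg (a i) t) + (n : ℝ) * (∑ j, gg (b j) t)
          - 2 * (∑ i, gg (a i) t) * (∑ j, gg (b j) t) := this
    _ = _ := by ring
end
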